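/- arXiv:2409.10438 — 4 statements merged into one kernel-verified Lean document; each statement's English description precedes it below -/
import Mathlib

section
/- Let C be a coherent additive idempotent complete category and F a finitely presented contravariant functor on C. Then F is 1-torsion free (Ext¹(Tr F, C(X,−)) = 0 for all X) if and only if F embeds into a projective object of mod C; and F is 2-torsion free if and only if the canonical map F → F** is an isomorphism. -/
open CategoryTheory CategoryTheory.Limits Opposite

namespace Paper


variable {C : Type*} [Category C] [Preadditive C]

/-- Exactness of the sequence of contravariant representable functors at interior position `i`. -/
def YExactAt {m : ℕ} (T : ComposableArrows C m) (i : ℕ) (h : i + 2 ≤ m) : Prop :=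
  T.map' i (i+1) (by omega) (by omega) ≫ T.map' (i+1) (i+2) (by omega) h = 0 ∧
  ∀ (W : C) (u : W ⟶ T.obj' (i+1) (by omega)),
    u ≫ T.map' (i+1) (i+2) (by omega) h = 0 →
      ∃ v : W ⟶ T.obj' i (by omega), v ≫ T.map' i (i+1) (by omega) (by omega) = u

/-- Exactness of the sequence of covariant representable functors at interior position `i`. -/
def CoYExactAt {m : ℕ} (T : ComposableArrows C m) (i : ℕ) (h : i + 2 ≤ m) : Prop :=
  T.map' i (i+1) (by omega) (by omega) ≫ T.map' (i+1) (i+2) (by omega) h = 0 ∧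
  ∀ (W : C) (u : T.obj' (i+1) (by omega) ⟶ W),
    T.map' i (i+1) (by omega) (by omega) ≫ u = 0 →
      ∃ v : T.obj' (i+2) h ⟶ W, T.map' (i+1) (i+2) (by omega) h ≫ v = u

/-- `T = [X_n → ⋯ → X_1 → X → Y]` is such that `X_n → ⋯ → X` is an `n`-kernel of the
last map `X ⟶ Y`, i.e. `0 → C(-,X_n) → ⋯ → C(-,X) → C(-,Y)` is exact. -/
def IsNKernelSeq (n : ℕ) (T : ComposableArrows C (n+1)) : Prop :=
  Mono (T.map' 0 1 (by omega) (by omega)) ∧ ∀ (i : ℕ) (h : i + 2 ≤ n + 1), YExactAt T i h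

/-- `T = [X → Y → Y_1 → ⋯ → Y_n]` is such that `Y → ⋯ → Y_n` is an `n`-cokernel of the
first map `X ⟶ Y`, i.e. `0 → C(Y_n,-) → ⋯ → C(Y,-) → C(X,-)` is exact. -/
def IsNCokernelSeq (n : ℕ) (T : ComposableArrows C (n+1)) : Prop :=
  Epi (T.map' n (n+1) (by omega) (by omega)) ∧ ∀ (i : ℕ) (h : i + 2 ≤ n + 1), CoYExactAt T i h

/-- `T` is an `n`-exact sequence. -/
def IsNExactSeq (n : ℕ) (T : ComposableArrows C (n+1)) : Prop :=
  IsNKernelSeq n T ∧ IsNCokernelSeq n T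

/-- The category `C` has `n`-kernels. -/
def HasNKernels (C : Type*) [Category C] [Preadditive C] (n : ℕ) : Prop :=
  ∀ ⦃X Y : C⦄ (f : X ⟶ Y), ∃ (T : ComposableArrows C (n+1))
    (hX : T.obj' n (by omega) = X) (hY : T.obj' (n+1) (by omega) = Y),
      T.map' n (n+1) (by omega) (by omega) = eqToHom hX ≫ f ≫ eqToHom hY.symm ∧
      IsNKernelSeq n T

/-- The category `C` has `n`-cokernels. -/
def HasNCokernels (C : Type*) [Category C] [Preadditive C] (n : ℕ) : Prop :=
  ∀ ⦃X Y : C⦄ (f : X ⟶ Y), ∃ (T : ComposableArrows C (n+1))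
    (hX : T.obj' 0 (by omega) = X) (hY : T.obj' 1 (by omega) = Y),
      T.map' 0 1 (by omega) (by omega) = eqToHom hX ≫ f ≫ eqToHom hY.symm ∧
      IsNCokernelSeq n T

/-- Axiom (A2): every monomorphism, together with any of its `n`-cokernels, forms an
`n`-exact sequence. -/
def AxiomA2 (C : Type*) [Category C] [Preadditive C] (n : ℕ) : Prop :=
  ∀ (T : ComposableArrows C (n+1)), Mono (T.map' 0 1 (by omega) (by omega)) →
    IsNCokernelSeq n T → IsNExactSeq n T

/-- Axiom (A2ᵒᵖ): every epimorphism, together with any of its `n`-kernels, forms an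
`n`-exact sequence. -/
def AxiomA2op (C : Type*) [Category C] [Preadditive C] (n : ℕ) : Prop :=
  ∀ (T : ComposableArrows C (n+1)), Epi (T.map' n (n+1) (by omega) (by omega)) →
    IsNKernelSeq n T → IsNExactSeq n T

/-- Jasso's axioms for an `n`-abelian category. -/
def IsNAbelian (C : Type*) [Category C] [Preadditive C] (n : ℕ) : Prop :=
  HasNKernels C n ∧ HasNCokernels C n ∧ AxiomA2 C n ∧ AxiomA2op C n

/-- `C` has weak kernels. -/
def HasWeakKernelsP (C : Type*) [Category C] [Preadditive C] : Prop :=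
  ∀ ⦃Y Z : C⦄ (g : Y ⟶ Z), ∃ (X : C) (f : X ⟶ Y), f ≫ g = 0 ∧
    ∀ ⦃W : C⦄ (u : W ⟶ Y), u ≫ g = 0 → ∃ v : W ⟶ X, v ≫ f = u

/-- `C` has weak cokernels. -/
def HasWeakCokernelsP (C : Type*) [Category C] [Preadditive C] : Prop :=
  ∀ ⦃X Y : C⦄ (f : X ⟶ Y), ∃ (Z : C) (g : Y ⟶ Z), f ≫ g = 0 ∧
    ∀ ⦃W : C⦄ (u : Y ⟶ W), f ≫ u = 0 → ∃ v : Z ⟶ W, g ≫ v = u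

/-- A category is von Neumann regular if every morphism factors as a split epimorphism
followed by a split monomorphism. -/
def VonNeumannRegular (C : Type*) [Category C] : Prop :=
  ∀ ⦃X Y : C⦄ (f : X ⟶ Y), ∃ (W : C) (p : X ⟶ W) (j : W ⟶ Y),
    IsSplitEpi p ∧ IsSplitMono j ∧ p ≫ j = f


universe u

variable (C : Type u) [Category.{u} C] [Preadditive C]

/-- The ambient category of contravariant additive-group-valued functors on `C`,
in which `mod C` lives. -/
abbrev AmbC := Cᵒᵖ ⥤ AddCommGrpCat.{u}

/-- The ambient category of covariant additive-group-valued functors on `C`,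
in which `mod Cᵒᵖ` lives. -/
abbrev AmbOp := C ⥤ AddCommGrpCat.{u}

variable {C}

/-- `p : B ⟶ Q` is a cokernel of `d : A ⟶ B` (universal property). -/
def IsCokernelπ {D : Type*} [Category D] [Limits.HasZeroMorphisms D]
    {A B Q : D} (d : A ⟶ B) (p : B ⟶ Q) : Prop :=
  d ≫ p = 0 ∧ ∀ ⦃T : D⦄ (q : B ⟶ T), d ≫ q = 0 → ∃! t : Q ⟶ T, p ≫ t = q

/-- A contravariant functor is finitely presented if it is a cokernel of a morphism
between representable functors. -/
def IsFinitelyPresented (F : AmbC C) : Prop :=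
  ∃ (X Y : C) (f : X ⟶ Y) (p : preadditiveYoneda.obj Y ⟶ F),
    IsCokernelπ (preadditiveYoneda.map f) p

/-- A covariant functor is finitely presented if it is a cokernel of a morphism
between corepresentable functors. -/
def IsFinitelyPresentedOp (G : AmbOp C) : Prop :=
  ∃ (X Y : C) (f : X ⟶ Y) (q : preadditiveCoyoneda.obj (op X) ⟶ G),
    IsCokernelπ (preadditiveCoyoneda.map f.op) q

variable (C)

/-- The category `mod C` of finitely presented contravariant functors. -/
def ModC := ObjectProperty.FullSubcategory (IsFinitelyPresented (C := C))

instance : Category (ModC C) := ObjectProperty.FullSubcategory.category _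

/-- The category `mod Cᵒᵖ` of finitely presented covariant functors. -/
def ModOp := ObjectProperty.FullSubcategory (IsFinitelyPresentedOp (C := C))

instance : Category (ModOp C) := ObjectProperty.FullSubcategory.category _

variable {C}

/-- A finitely generated projective object of `mod C`: a direct summand of a
representable functor. -/
def IsFGProj (P : AmbC C) : Prop :=
  ∃ (X : C) (s : P ⟶ preadditiveYoneda.obj X) (r : preadditiveYoneda.obj X ⟶ P),
    s ≫ r = 𝟙 P

/-- A finitely generated projective object of `mod Cᵒᵖ`: a direct summand of a
corepresentable functor. -/
def IsFGProjOp (P : AmbOp C) : Prop :=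
  ∃ (X : C) (s : P ⟶ preadditiveCoyoneda.obj (op X))
    (r : preadditiveCoyoneda.obj (op X) ⟶ P), s ≫ r = 𝟙 P

/-- `pdim F ≤ d` in `mod C`: there is an exact sequence
`0 → P_d → ⋯ → P_0 → F → 0` with all `P_i` finitely generated projective. -/
def PdimLE (F : AmbC C) (d : ℕ) : Prop :=
  ∃ T : ComposableArrows (AmbC C) (d+1), T.obj' (d+1) (by omega) = F ∧
    (∀ (i : ℕ) (hi : i ≤ d), IsFGProj (T.obj' i (by omega))) ∧
    T.Exact ∧ Mono (T.map' 0 1 (by omega) (by omega)) ∧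
    Epi (T.map' d (d+1) (by omega) (by omega))

/-- `pdim G ≤ d` in `mod Cᵒᵖ`. -/
def PdimOpLE (G : AmbOp C) (d : ℕ) : Prop :=
  ∃ T : ComposableArrows (AmbOp C) (d+1), T.obj' (d+1) (by omega) = G ∧
    (∀ (i : ℕ) (hi : i ≤ d), IsFGProjOp (T.obj' i (by omega))) ∧
    T.Exact ∧ Mono (T.map' 0 1 (by omega) (by omega)) ∧
    Epi (T.map' d (d+1) (by omega) (by omega))

variable (C)

/-- `gldim (mod C) ≤ d`. -/
def GldimLE (d : ℕ) : Prop :=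
  ∀ F : AmbC C, IsFinitelyPresented F → PdimLE F d

/-- `gldim (mod Cᵒᵖ) ≤ d`. -/
def GldimOpLE (d : ℕ) : Prop :=
  ∀ G : AmbOp C, IsFinitelyPresentedOp G → PdimOpLE G d

variable {C}

/-- `G ∈ mod Cᵒᵖ` is a transpose of `F ∈ mod C`: for some morphism `f : X ⟶ Y` of `C`,
`F` is the cokernel of `C(-,f)` and `G` is the cokernel of `C(f,-)`. -/
def IsTransposeOf (G : AmbOp C) (F : AmbC C) : Prop :=
  ∃ (X Y : C) (f : X ⟶ Y) (p : preadditiveYoneda.obj Y ⟶ F)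
    (q : preadditiveCoyoneda.obj (op X) ⟶ G),
      IsCokernelπ (preadditiveYoneda.map f) p ∧
      IsCokernelπ (preadditiveCoyoneda.map f.op) q

/-- The homology of `Hom(P'',H) → Hom(P,H) → Hom(P',H)` (obtained by applying `Hom(-,H)`
to `P' ⟶ P ⟶ P''`) vanishes. -/
def ExtVanishesAt {D : Type*} [Category D] [Preadditive D] {P' P P'' : D}
    (d1 : P' ⟶ P) (d0 : P ⟶ P'') (H : D) : Prop :=
  ∀ φ : P ⟶ H, d1 ≫ φ = 0 → ∃ ψ : P'' ⟶ H, d0 ≫ ψ = φ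

/-- A partial projective resolution `P_{m} → ⋯ → P_0 → G` in `mod Cᵒᵖ`. -/
def IsPartialProjResolutionOp {m : ℕ} (R : ComposableArrows (AmbOp C) (m+1))
    (G : AmbOp C) : Prop :=
  R.obj' (m+1) (by omega) = G ∧
  (∀ (j : ℕ) (hj : j ≤ m), IsFGProjOp (R.obj' j (by omega))) ∧
  R.Exact ∧ Epi (R.map' m (m+1) (by omega) (by omega))

/-- A partial projective resolution `P_{m} → ⋯ → P_0 → F` in `mod C`. -/
def IsPartialProjResolutionC {m : ℕ} (R : ComposableArrows (AmbC C) (m+1))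
    (F : AmbC C) : Prop :=
  R.obj' (m+1) (by omega) = F ∧
  (∀ (j : ℕ) (hj : j ≤ m), IsFGProj (R.obj' j (by omega))) ∧
  R.Exact ∧ Epi (R.map' m (m+1) (by omega) (by omega))

/-- `F ∈ mod C` is `k`-torsion free: `Ext^i(Tr F, C(X,-)) = 0` for all `1 ≤ i ≤ k` and
all `X ∈ C`, the `Ext` groups being computed from a projective resolution of a transpose
`Tr F` in `mod Cᵒᵖ`. -/
def IsTorsionFree (F : AmbC C) (k : ℕ) : Prop :=
  ∃ G : AmbOp C, IsTransposeOf G F ∧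
    ∀ i : ℕ, 1 ≤ i → i ≤ k →
      ∃ R : ComposableArrows (AmbOp C) (i+2), IsPartialProjResolutionOp R G ∧
        ∀ X : C, ExtVanishesAt (R.map' 0 1 (by omega) (by omega))
          (R.map' 1 2 (by omega) (by omega)) (preadditiveCoyoneda.obj (op X))

/-- `G ∈ mod Cᵒᵖ` is `k`-torsion free: `Ext^i(Tr G, C(-,X)) = 0` for all `1 ≤ i ≤ k` and
all `X ∈ C`. -/
def IsTorsionFreeOp (G : AmbOp C) (k : ℕ) : Prop :=
  ∃ F : AmbC C, IsTransposeOf G F ∧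
    ∀ i : ℕ, 1 ≤ i → i ≤ k →
      ∃ R : ComposableArrows (AmbC C) (i+2), IsPartialProjResolutionC R F ∧
        ∀ X : C, ExtVanishesAt (R.map' 0 1 (by omega) (by omega))
          (R.map' 1 2 (by omega) (by omega)) (preadditiveYoneda.obj X)

/-- The dual `F*` of a contravariant functor `F`, given by `F*(Y) = Hom(F, C(-,Y))`. -/
def dualR (F : AmbC C) : AmbOp C where
  obj Y := AddCommGrpCat.of (F ⟶ preadditiveYoneda.obj Y)
  map {Y Y'} g := AddCommGrpCat.ofHom
    { toFun := fun α => α ≫ preadditiveYoneda.map g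
      map_zero' := by simp
      map_add' := by intro α β; simp [Preadditive.add_comp] }
  map_id := by
    intro Y
    ext α
    simp
  map_comp := by
    intro Y₁ Y₂ Y₃ g g'
    ext α : 2
    show α ≫ preadditiveYoneda.map (g ≫ g') =
      (α ≫ preadditiveYoneda.map g) ≫ preadditiveYoneda.map g'
    rw [Functor.map_comp, Category.assoc]

/-- The dual `G*` of a covariant functor `G`, given by `G*(X) = Hom(G, C(X,-))`. -/
def dualL (G : AmbOp C) : AmbC C where
  obj X := AddCommGrpCat.of (G ⟶ preadditiveCoyoneda.obj X)
  map {X X'} h := AddCommGrpCat.ofHom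
    { toFun := fun β => β ≫ preadditiveCoyoneda.map h
      map_zero' := by simp
      map_add' := by intro β γ; simp [Preadditive.add_comp] }
  map_id := by
    intro X
    ext β
    simp
  map_comp := by
    intro X₁ X₂ X₃ h h'
    ext β : 2
    show β ≫ preadditiveCoyoneda.map (h ≫ h') =
      (β ≫ preadditiveCoyoneda.map h) ≫ preadditiveCoyoneda.map h'
    rw [Functor.map_comp, Category.assoc]

/-- The double dual `F**`. -/
def ddual (F : AmbC C) : AmbC C := dualL (dualR F)


/-- Evaluation at `a ∈ F(X)`: the natural transformation `F* ⟶ C(X,-)`. -/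
def evalNat (F : AmbC C) (X : Cᵒᵖ) (a : F.obj X) :
    dualR F ⟶ preadditiveCoyoneda.obj X where
  app Y := AddCommGrpCat.ofHom
    { toFun := fun α => α.app X a
      map_zero' := rfl
      map_add' := by intro α β; rfl }
  naturality := by
    intro Y Y' g
    ext α
    rfl


/-- The canonical morphism `F ⟶ F**` to the double dual. -/
def ddualUnit (F : AmbC C) : F ⟶ ddual F where
  app X := AddCommGrpCat.ofHom
    { toFun := fun a => evalNat F X a
      map_zero' := by
        ext Y α
        show α.app X 0 = 0
        simp
      map_add' := by
        intro a b
        ext Y α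
        show α.app X (a + b) = α.app X a + α.app X b
        simp }
  naturality := by
    intro X X' h
    ext a
    show evalNat F X' (F.map h a) = evalNat F X a ≫ preadditiveCoyoneda.map h
    ext Y α
    show α.app X' (F.map h a) = (preadditiveCoyoneda.map h).app Y (α.app X a)
    have h1 := congrArg (fun (m : F.obj X ⟶ (preadditiveYoneda.obj Y).obj X') => m a)
      (α.naturality h)
    dsimp only at h1
    have h2 : α.app X' (F.map h a) = ((preadditiveYoneda.obj Y).map h) (α.app X a) := h1
    rw [h2]
    rfl


/-- Precomposition with `d`, as an additive map between hom-groups. -/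
def precompHom {D : Type*} [Category D] [Preadditive D] {A B : D} (d : A ⟶ B) (H : D) :
    (B ⟶ H) →+ (A ⟶ H) :=
  AddMonoidHom.mk' (fun φ => d ≫ φ) (fun φ ψ => Preadditive.comp_add _ _ _ _ _ _)

/-- The cohomology at the middle spot of `Hom(P'',H) → Hom(P,H) → Hom(P',H)`, i.e. the
`Ext` group computed from the (partial resolution) data `P' --d1--> P --d0--> P''`. -/
def extGrp {D : Type*} [Category D] [Preadditive D] {P' P P'' : D}
    (d1 : P' ⟶ P) (d0 : P ⟶ P'') (H : D) : Type _ :=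
  AddMonoidHom.ker (precompHom d1 H) ⧸
    ((precompHom d0 H).range.addSubgroupOf (AddMonoidHom.ker (precompHom d1 H)))

noncomputable instance {D : Type*} [Category D] [Preadditive D] {P' P P'' : D}
    (d1 : P' ⟶ P) (d0 : P ⟶ P'') (H : D) : AddCommGroup (extGrp d1 d0 H) := by
  unfold extGrp; infer_instance

end Paper

open Paper Opposite

namespace Paper13

open CategoryTheory CategoryTheory.Limits Opposite Paper

universe v w

section Generic

variable {K : Type v} [Category.{w} K]

abbrev Amb (K : Type v) [Category.{w} K] := K ⥤ AddCommGrpCat.{max v w}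

/-- needed instances sanity -/
noncomputable example : Abelian (Amb K) := inferInstance

variable {A B Q H : Amb K}

lemma hom_ext_pt {η θ : A ⟶ B} (h : ∀ (k : K) (x : A.obj k), η.app k x = θ.app k x) :
    η = θ := by
  ext k x; exact h k x

lemma comp_app_pt (η : A ⟶ B) (θ : B ⟶ Q) (k : K) (x : A.obj k) :
    (η ≫ θ).app k x = θ.app k (η.app k x) := rfl

/-- pointwise surjectivity -/
def Surj (η : A ⟶ B) : Prop := ∀ k : K, Function.Surjective (η.app k)

/-- pointwise exactness -/
def ExactPt (η : A ⟶ B) (θ : B ⟶ Q) : Prop :=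
  ∀ (k : K) (x : B.obj k), θ.app k x = 0 → ∃ a : A.obj k, η.app k a = x

lemma zero_app_pt (k : K) (x : A.obj k) : (0 : A ⟶ B).app k x = 0 := rfl

lemma eq_zero_pt {η : A ⟶ B} (h : η = 0) (k : K) (x : A.obj k) : η.app k x = 0 := by
  rw [h]; rfl

lemma surj_of_epi (η : A ⟶ B) [Epi η] : Surj η := fun k =>
  (AddCommGrpCat.epi_iff_surjective _).1 inferInstance

lemma epi_of_surj (η : A ⟶ B) (h : Surj η) : Epi η := by
  have : ∀ k : K, Epi (η.app k) := fun k => (AddCommGrpCat.epi_iff_surjective _).2 (h k)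
  exact NatTrans.epi_of_epi_app η

lemma inj_of_mono (η : A ⟶ B) [Mono η] (k : K) : Function.Injective (η.app k) :=
  (AddCommGrpCat.mono_iff_injective _).1 inferInstance

lemma mono_of_inj (η : A ⟶ B) (h : ∀ k : K, Function.Injective (η.app k)) : Mono η := by
  have : ∀ k : K, Mono (η.app k) := fun k => (AddCommGrpCat.mono_iff_injective _).2 (h k)
  exact NatTrans.mono_of_mono_app η

lemma cokπ_epi {d : A ⟶ B} {p : B ⟶ Q} (h : IsCokernelπ d p) : Epi p := by
  constructor
  intro T q₁ q₂ hq
  have h0 : d ≫ p ≫ q₂ = 0 := by rw [← Category.assoc, h.1, zero_comp]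
  obtain ⟨t, -, huniq⟩ := h.2 (p ≫ q₂) h0
  rw [huniq q₂ rfl, huniq q₁ hq]

lemma cokπ_surj {d : A ⟶ B} {p : B ⟶ Q} (h : IsCokernelπ d p) : Surj p := by
  have := cokπ_epi h
  exact surj_of_epi p

/-- a cokernel π gives an `IsColimit` cofork -/
noncomputable def cokπ_isColimit {d : A ⟶ B} {p : B ⟶ Q} (h : IsCokernelπ d p) :
    IsColimit (CokernelCofork.ofπ p h.1) :=
  CokernelCofork.IsColimit.ofπ _ _
    (fun q hq => (h.2 q hq).choose)
    (fun q hq => (h.2 q hq).choose_spec.1)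
    (fun q hq m hm => (h.2 q hq).choose_spec.2 m hm)

lemma exactPt_of_exact {S : ShortComplex (Amb K)} (hS : S.Exact) : ExactPt S.f S.g := by
  intro k x hx
  have h2 := hS.map ((evaluation K AddCommGrpCat.{max v w}).obj k)
  rw [ShortComplex.ab_exact_iff] at h2
  exact h2 x hx

lemma cokπ_exactPt {d : A ⟶ B} {p : B ⟶ Q} (h : IsCokernelπ d p) : ExactPt d p := by
  have hS : (ShortComplex.mk d p h.1).Exact :=
    ShortComplex.exact_of_g_is_cokernel _ (cokπ_isColimit h)
  exact exactPt_of_exact hS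

lemma exact_of_exactPt (S : ShortComplex (Amb K)) (h : ExactPt S.f S.g) : S.Exact := by
  rw [S.exact_iff_kernel_ι_comp_cokernel_π_zero]
  apply hom_ext_pt
  intro k x
  have h1 : ∃ a, S.f.app k a = (kernel.ι S.g).app k x := by
    apply h
    rw [← comp_app_pt, kernel.condition]; rfl
  obtain ⟨a, ha⟩ := h1
  have h2 : (cokernel.π S.f).app k ((kernel.ι S.g).app k x) = 0 := by
    rw [← ha, ← comp_app_pt, cokernel.condition]; rfl
  rw [comp_app_pt, h2]; rfl

lemma isCokernelπ_cokernelπ (d : A ⟶ B) : IsCokernelπ d (cokernel.π d) := by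
  refine ⟨cokernel.condition d, fun T q hq => ?_⟩
  exact ⟨cokernel.desc d q hq, cokernel.π_desc d q hq,
    fun t ht => coequalizer.hom_ext (by simpa using ht)⟩

lemma split_inj {P Q : Amb K} (s : P ⟶ Q) (r : Q ⟶ P) (hsr : s ≫ r = 𝟙 P) (Z : K) :
    Function.Injective (s.app Z) := by
  intro a b hab
  have ha := congrArg (fun (m : P.obj Z ⟶ P.obj Z) => m a) (congrArg (fun m => NatTrans.app m Z) hsr)
  have hb := congrArg (fun (m : P.obj Z ⟶ P.obj Z) => m b) (congrArg (fun m => NatTrans.app m Z) hsr)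
  simp only [NatTrans.comp_app] at ha hb
  calc a = r.app Z (s.app Z a) := ha.symm
    _ = r.app Z (s.app Z b) := by rw [hab]
    _ = b := hb

lemma naturality_pt (η : A ⟶ B) {k k' : K} (f : k ⟶ k') (x : A.obj k) :
    η.app k' (A.map f x) = B.map f (η.app k x) :=
  congrArg (fun (m : A.obj k ⟶ B.obj k') => m x) (η.naturality f)

lemma isIso_of_bij {A B : Amb K} (η : A ⟶ B) (hb : ∀ k, Function.Bijective (η.app k)) :
    IsIso η := by
  have h1 : Mono η := mono_of_inj η fun k => (hb k).1
  have h2 : Epi η := epi_of_surj η fun k => (hb k).2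
  exact isIso_of_mono_of_epi η

lemma bij_of_isIso {A B : Amb K} (η : A ⟶ B) [IsIso η] (k : K) :
    Function.Bijective (η.app k) := by
  have h1 : Mono η := inferInstance
  have h2 : Epi η := inferInstance
  exact ⟨inj_of_mono η k, surj_of_epi η k⟩

end Generic

section Pre

variable {C : Type u} [Category.{u} C] [Preadditive C]

/-- the corepresentable functor -/
abbrev coY (V : C) : AmbOp C := preadditiveCoyoneda.obj (op V)

/-- the representable functor -/
abbrev yY (V : C) : AmbC C := preadditiveYoneda.obj V

lemma coY_map_pt {V Z Z' : C} (k : Z ⟶ Z') (x : (coY V).obj Z) :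
    ((coY V).map k x : V ⟶ Z') = (x : V ⟶ Z) ≫ k := rfl

lemma coY_id_elt {V Z : C} (x : (coY V).obj Z) : (coY V).map (x : V ⟶ Z) (𝟙 V : V ⟶ V) = x := by
  show (𝟙 V ≫ (x : V ⟶ Z) : V ⟶ Z) = x
  exact Category.id_comp _

lemma coY_eval {V : C} {A : AmbOp C} (η : coY V ⟶ A) {Z : C} (x : (coY V).obj Z) :
    η.app Z x = A.map (x : V ⟶ Z) (η.app V (𝟙 V : V ⟶ V)) := by
  conv_lhs => rw [← coY_id_elt x]
  exact naturality_pt η (x : V ⟶ Z) (𝟙 V : V ⟶ V)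

/-- pointwise additivity of a functor -/
def PtAdd (A : AmbOp C) : Prop :=
  ∀ {Z Z' : C} (k k' : Z ⟶ Z'), A.map (k + k') = A.map k + A.map k'

lemma ptAdd_coY (V : C) : PtAdd (coY V) := by
  intro Z Z' k k'
  ext x
  show (x : V ⟶ Z) ≫ (k + k') = ((coY V).map k + (coY V).map k') x
  have : ((coY V).map k + (coY V).map k') x = (coY V).map k x + (coY V).map k' x := rfl
  rw [this]
  exact Preadditive.comp_add _ _ _ _ _ _

lemma ptAdd_summand {P Q : AmbOp C} (s : P ⟶ Q) (r : Q ⟶ P) (hsr : s ≫ r = 𝟙 P)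
    (hQ : PtAdd Q) : PtAdd P := by
  intro Z Z' k k'
  ext x
  apply split_inj s r hsr
  have h1 : s.app Z' (P.map (k + k') x) = Q.map (k + k') (s.app Z x) := naturality_pt s _ x
  have h2 : s.app Z' (P.map k x) = Q.map k (s.app Z x) := naturality_pt s _ x
  have h3 : s.app Z' (P.map k' x) = Q.map k' (s.app Z x) := naturality_pt s _ x
  have h4 : ((P.map k + P.map k') x : P.obj Z') = P.map k x + P.map k' x := rfl
  rw [h4, map_add, h1, hQ k k', h2, h3]
  rfl

lemma ptAdd_fgproj {P : AmbOp C} (h : IsFGProjOp P) : PtAdd P := by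
  obtain ⟨V, s, r, hsr⟩ := h
  exact ptAdd_summand s r hsr (ptAdd_coY V)

/-- from an element `a : A.obj V`, construct `C(V,-) ⟶ A` (for `A` pointwise additive). -/
def elemHom {A : AmbOp C} (hA : PtAdd A) {V : C} (a : A.obj V) : coY V ⟶ A where
  app Z := AddCommGrpCat.ofHom (AddMonoidHom.mk' (fun x => A.map (x : V ⟶ Z) a) (by
    intro x y
    show A.map ((x : V ⟶ Z) + (y : V ⟶ Z)) a = _
    erw [hA]
    rfl))
  naturality := by
    intro Z Z' k
    ext x
    show A.map ((coY V).map k x : V ⟶ Z') a = A.map k (A.map (x : V ⟶ Z) a)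
    erw [coY_map_pt, A.map_comp]
    rfl

lemma elemHom_app {A : AmbOp C} (hA : PtAdd A) {V : C} (a : A.obj V) {Z : C}
    (x : (coY V).obj Z) : (elemHom hA a).app Z x = A.map (x : V ⟶ Z) a := rfl

lemma elemHom_app_id {A : AmbOp C} (hA : PtAdd A) {V : C} (a : A.obj V) :
    (elemHom hA a).app V (𝟙 V : V ⟶ V) = a := by
  erw [elemHom_app]
  show (A.map (𝟙 V)) a = a
  rw [A.map_id]
  rfl

lemma lift_fgproj {P A B : AmbOp C} (hP : IsFGProjOp P) (hA : PtAdd A)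
    (e : A ⟶ B) (β : P ⟶ B) (hl : ∀ (Z : C) (x : P.obj Z), ∃ a, e.app Z a = β.app Z x) :
    ∃ α : P ⟶ A, α ≫ e = β := by
  obtain ⟨V, s, r, hsr⟩ := hP
  obtain ⟨a, ha⟩ := hl V (r.app V (𝟙 V : V ⟶ V))
  refine ⟨s ≫ elemHom hA a, ?_⟩
  apply hom_ext_pt
  intro Z x
  have h1 : ((s ≫ elemHom hA a) ≫ e).app Z x = e.app Z (A.map (s.app Z x : V ⟶ Z) a) := rfl
  erw [h1, naturality_pt e _ a, ha,
    ← naturality_pt β (s.app Z x : V ⟶ Z) (r.app V (𝟙 V : V ⟶ V))]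
  congr 1
  have h2 : P.map (s.app Z x : V ⟶ Z) (r.app V (𝟙 V : V ⟶ V))
      = r.app Z ((coY V).map (s.app Z x : V ⟶ Z) (𝟙 V : V ⟶ V)) :=
    (naturality_pt r _ _).symm
  rw [h2, coY_id_elt]
  exact congrArg (fun (m : P.obj Z ⟶ P.obj Z) => m x) (congrArg (fun m => NatTrans.app m Z) hsr)

lemma lift_surj {P A B : AmbOp C} (hP : IsFGProjOp P) (hA : PtAdd A)
    (e : A ⟶ B) (hsur : Surj e) (β : P ⟶ B) : ∃ α : P ⟶ A, α ≫ e = β :=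
  lift_fgproj hP hA e β (fun Z x => hsur Z (β.app Z x))

lemma lift_exact {P A B Q : AmbOp C} (hP : IsFGProjOp P) (hA : PtAdd A)
    (b : A ⟶ B) (e : B ⟶ Q) (hex : ExactPt b e) (β : P ⟶ B) (hβ : β ≫ e = 0) :
    ∃ α : P ⟶ A, α ≫ b = β :=
  lift_fgproj hP hA b β (fun Z x => hex Z (β.app Z x)
    (by rw [← comp_app_pt]; exact eq_zero_pt hβ Z x))

/-- Transfer of `Ext¹`-vanishing between partial projective resolutions of `G`. -/
lemma transfer₁ {P2 P1 P0 Q2 Q1 Q0 G H : AmbOp C}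
    (a : P2 ⟶ P1) (b : P1 ⟶ P0) (e : P0 ⟶ G)
    (a' : Q2 ⟶ Q1) (b' : Q1 ⟶ Q0) (e' : Q0 ⟶ G)
    (hP0 : IsFGProjOp P0) (hP1 : IsFGProjOp P1) (hP2 : IsFGProjOp P2)
    (hQ0 : IsFGProjOp Q0) (hQ1 : IsFGProjOp Q1) (hQ2 : IsFGProjOp Q2)
    (hPab : a ≫ b = 0) (hPbe : b ≫ e = 0) (hQbe : b' ≫ e' = 0)
    (hexP1 : ExactPt a b) (hexP0 : ExactPt b e)
    (hexQ1 : ExactPt a' b') (hexQ0 : ExactPt b' e')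
    (hsurP : Surj e) (hsurQ : Surj e')
    (hvan : ∀ φ : P1 ⟶ H, a ≫ φ = 0 → ∃ ψ : P0 ⟶ H, b ≫ ψ = φ) :
    ∀ φ : Q1 ⟶ H, a' ≫ φ = 0 → ∃ ψ : Q0 ⟶ H, b' ≫ ψ = φ := by
  obtain ⟨u0, hu0⟩ := lift_surj hQ0 (ptAdd_fgproj hP0) e hsurP e'
  obtain ⟨u1, hu1⟩ := lift_exact hQ1 (ptAdd_fgproj hP1) b e hexP0 (b' ≫ u0)
    (by rw [Category.assoc, hu0, hQbe])
  obtain ⟨v0, hv0⟩ := lift_surj hP0 (ptAdd_fgproj hQ0) e' hsurQ e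
  obtain ⟨v1, hv1⟩ := lift_exact hP1 (ptAdd_fgproj hQ1) b' e' hexQ0 (b ≫ v0)
    (by rw [Category.assoc, hv0, hPbe])
  obtain ⟨v2, hv2⟩ := lift_exact hP2 (ptAdd_fgproj hQ2) a' b' hexQ1 (a ≫ v1)
    (by rw [Category.assoc, hv1, ← Category.assoc, hPab, zero_comp])
  obtain ⟨σ0, hσ0⟩ := lift_exact hQ0 (ptAdd_fgproj hQ1) b' e' hexQ0 (u0 ≫ v0 - 𝟙 Q0)
    (by rw [Preadditive.sub_comp, Category.assoc, hv0, hu0, Category.id_comp, sub_self])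
  obtain ⟨σ1, hσ1⟩ := lift_exact hQ1 (ptAdd_fgproj hQ2) a' b' hexQ1
    (u1 ≫ v1 - 𝟙 Q1 - b' ≫ σ0)
    (by
      simp only [Preadditive.sub_comp, Category.assoc, Category.id_comp, hv1, hσ0]
      simp only [Preadditive.comp_sub, Category.comp_id]
      rw [← reassoc_of% hu1]
      abel)
  intro φ hφ
  obtain ⟨ψ', hψ'⟩ := hvan (v1 ≫ φ)
    (by rw [← reassoc_of% hv2, hφ, comp_zero])
  refine ⟨u0 ≫ ψ' - σ0 ≫ φ, ?_⟩
  have key : b' ≫ σ0 = u1 ≫ v1 - 𝟙 Q1 - σ1 ≫ a' := by rw [hσ1]; abel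
  simp only [Preadditive.comp_sub]
  rw [← reassoc_of% hu1, hψ', reassoc_of% key]
  simp only [Preadditive.sub_comp, Category.assoc, Category.id_comp, hφ, comp_zero]
  abel

/-- Transfer of `Ext²`-vanishing between partial projective resolutions of `G`. -/
lemma transfer₂ {P3 P2 P1 P0 Q3 Q2 Q1 Q0 G H : AmbOp C}
    (c : P3 ⟶ P2) (a : P2 ⟶ P1) (b : P1 ⟶ P0) (e : P0 ⟶ G)
    (c' : Q3 ⟶ Q2) (a' : Q2 ⟶ Q1) (b' : Q1 ⟶ Q0) (e' : Q0 ⟶ G)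
    (hP0 : IsFGProjOp P0) (hP1 : IsFGProjOp P1) (hP2 : IsFGProjOp P2) (hP3 : IsFGProjOp P3)
    (hQ0 : IsFGProjOp Q0) (hQ1 : IsFGProjOp Q1) (hQ2 : IsFGProjOp Q2) (hQ3 : IsFGProjOp Q3)
    (hPca : c ≫ a = 0) (hPab : a ≫ b = 0) (hPbe : b ≫ e = 0)
    (hQab : a' ≫ b' = 0) (hQbe : b' ≫ e' = 0)
    (hexP2 : ExactPt c a) (hexP1 : ExactPt a b) (hexP0 : ExactPt b e)
    (hexQ2 : ExactPt c' a') (hexQ1 : ExactPt a' b') (hexQ0 : ExactPt b' e')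
    (hsurP : Surj e) (hsurQ : Surj e')
    (hvan : ∀ φ : P2 ⟶ H, c ≫ φ = 0 → ∃ ψ : P1 ⟶ H, a ≫ ψ = φ) :
    ∀ φ : Q2 ⟶ H, c' ≫ φ = 0 → ∃ ψ : Q1 ⟶ H, a' ≫ ψ = φ := by
  obtain ⟨u0, hu0⟩ := lift_surj hQ0 (ptAdd_fgproj hP0) e hsurP e'
  obtain ⟨u1, hu1⟩ := lift_exact hQ1 (ptAdd_fgproj hP1) b e hexP0 (b' ≫ u0)
    (by rw [Category.assoc, hu0, hQbe])
  obtain ⟨u2, hu2⟩ := lift_exact hQ2 (ptAdd_fgproj hP2) a b hexP1 (a' ≫ u1)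
    (by rw [Category.assoc, hu1, ← Category.assoc, hQab, zero_comp])
  obtain ⟨v0, hv0⟩ := lift_surj hP0 (ptAdd_fgproj hQ0) e' hsurQ e
  obtain ⟨v1, hv1⟩ := lift_exact hP1 (ptAdd_fgproj hQ1) b' e' hexQ0 (b ≫ v0)
    (by rw [Category.assoc, hv0, hPbe])
  obtain ⟨v2, hv2⟩ := lift_exact hP2 (ptAdd_fgproj hQ2) a' b' hexQ1 (a ≫ v1)
    (by rw [Category.assoc, hv1, ← Category.assoc, hPab, zero_comp])
  obtain ⟨v3, hv3⟩ := lift_exact hP3 (ptAdd_fgproj hQ3) c' a' hexQ2 (c ≫ v2)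
    (by rw [Category.assoc, hv2, ← Category.assoc, hPca, zero_comp])
  obtain ⟨σ0, hσ0⟩ := lift_exact hQ0 (ptAdd_fgproj hQ1) b' e' hexQ0 (u0 ≫ v0 - 𝟙 Q0)
    (by rw [Preadditive.sub_comp, Category.assoc, hv0, hu0, Category.id_comp, sub_self])
  obtain ⟨σ1, hσ1⟩ := lift_exact hQ1 (ptAdd_fgproj hQ2) a' b' hexQ1
    (u1 ≫ v1 - 𝟙 Q1 - b' ≫ σ0)
    (by
      simp only [Preadditive.sub_comp, Category.assoc, Category.id_comp, hv1, hσ0]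
      simp only [Preadditive.comp_sub, Category.comp_id]
      rw [← reassoc_of% hu1]
      abel)
  obtain ⟨σ2, hσ2⟩ := lift_exact hQ2 (ptAdd_fgproj hQ3) c' a' hexQ2
    (u2 ≫ v2 - 𝟙 Q2 - a' ≫ σ1)
    (by
      simp only [Preadditive.sub_comp, Category.assoc, Category.id_comp, hv2, hσ1]
      simp only [Preadditive.comp_sub, Category.comp_id]
      rw [← reassoc_of% hu2, reassoc_of% hQab]
      simp only [zero_comp, comp_zero]
      abel)
  intro φ hφ
  obtain ⟨ψ', hψ'⟩ := hvan (v2 ≫ φ)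
    (by rw [← reassoc_of% hv3, hφ, comp_zero])
  refine ⟨u1 ≫ ψ' - σ1 ≫ φ, ?_⟩
  have key : a' ≫ σ1 = u2 ≫ v2 - 𝟙 Q2 - σ2 ≫ c' := by rw [hσ2]; abel
  simp only [Preadditive.comp_sub]
  rw [← reassoc_of% hu2, hψ', reassoc_of% key]
  simp only [Preadditive.sub_comp, Category.assoc, Category.id_comp, hφ, comp_zero]
  abel

/-- contravariant action on corepresentables -/
abbrev cm {X Y : C} (f : X ⟶ Y) : coY Y ⟶ coY X := preadditiveCoyoneda.map f.op

lemma cm_app {X Y Z : C} (f : X ⟶ Y) (x : (coY Y).obj Z) :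
    ((cm f).app Z x : X ⟶ Z) = f ≫ (x : Y ⟶ Z) := rfl

lemma hom_eq_zero_pt {K : Type v} [Category.{w} K] {A B : Amb K} {η : A ⟶ B}
    (h : ∀ (k : K) (x : A.obj k), η.app k x = 0) : η = 0 :=
  hom_ext_pt (fun k x => (h k x).trans rfl)

lemma exactPt_comp_eqToHom {A B Q Q' : AmbOp C} {b : A ⟶ B} {p : B ⟶ Q} (h : Q = Q')
    (hex : ExactPt b p) : ExactPt b (p ≫ eqToHom h) := by
  subst h
  rw [eqToHom_refl, Category.comp_id]
  exact hex

lemma surj_comp_eqToHom {B Q Q' : AmbOp C} {p : B ⟶ Q} (h : Q = Q')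
    (hs : Surj p) : Surj (p ≫ eqToHom h) := by
  subst h
  rw [eqToHom_refl, Category.comp_id]
  exact hs

/-- Translation of the Ext-vanishing condition into elementwise form. -/
lemma extVan_iff_cond {X Y W Z : C} (f : X ⟶ Y) (g : Y ⟶ W) :
    ExtVanishesAt (cm g) (cm f) (coY Z) ↔
      ∀ t : Z ⟶ Y, t ≫ g = 0 → ∃ s : Z ⟶ X, s ≫ f = t := by
  constructor
  · intro hvan t ht
    have hφ0 : cm g ≫ elemHom (ptAdd_coY Z) (t : (coY Z).obj Y) = 0 := by
      apply hom_eq_zero_pt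
      intro Z' x
      erw [comp_app_pt, elemHom_app]
      show t ≫ (g ≫ (x : W ⟶ Z')) = 0
      erw [← Category.assoc, ht, zero_comp]
    obtain ⟨ψ, hψ⟩ := hvan (elemHom (ptAdd_coY Z) (t : (coY Z).obj Y)) hφ0
    refine ⟨(ψ.app X (𝟙 X : X ⟶ X) : Z ⟶ X), ?_⟩
    have := congrArg (fun (m : (coY Y).obj Y ⟶ (coY Z).obj Y) => m (𝟙 Y : Y ⟶ Y))
      (congrArg (fun m => NatTrans.app m Y) hψ)
    simp only [NatTrans.comp_app] at this
    have h1 : ψ.app Y ((cm f).app Y (𝟙 Y : Y ⟶ Y))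
        = (elemHom (ptAdd_coY Z) (t : (coY Z).obj Y)).app Y (𝟙 Y : Y ⟶ Y) := this
    erw [coY_eval ψ ((cm f).app Y (𝟙 Y : Y ⟶ Y))] at h1
    have h2 : (((cm f).app Y (𝟙 Y : Y ⟶ Y)) : X ⟶ Y) = f := by
      erw [cm_app]; exact Category.comp_id f
    erw [h2] at h1
    have h3 : ((coY Z).map f ((ψ.app X) (𝟙 X : X ⟶ X)) : Z ⟶ Y)
        = ((ψ.app X) (𝟙 X : X ⟶ X) : Z ⟶ X) ≫ f := rfl
    have h4 : ((coY Z).map (𝟙 Y : Y ⟶ Y) (t : (coY Z).obj Y) : Z ⟶ Y) = t ≫ 𝟙 Y := rfl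
    exact h1.trans (h4.trans (Category.comp_id t))
  · intro hc φ hφ
    set t : Z ⟶ Y := (φ.app Y (𝟙 Y : Y ⟶ Y) : Z ⟶ Y) with hts
    have htg : t ≫ g = 0 := by
      have := congrArg (fun (m : (coY W).obj W ⟶ (coY Z).obj W) => m (𝟙 W : W ⟶ W))
        (congrArg (fun m => NatTrans.app m W) hφ)
      simp only [NatTrans.comp_app] at this
      have h1 : φ.app W ((cm g).app W (𝟙 W : W ⟶ W)) = 0 := this
      rw [coY_eval φ ((cm g).app W (𝟙 W : W ⟶ W))] at h1
      have h2 : (((cm g).app W (𝟙 W : W ⟶ W)) : Y ⟶ W) = g := by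
        erw [cm_app]; exact Category.comp_id g
      rw [h2] at h1
      exact h1
    obtain ⟨s, hs⟩ := hc t htg
    refine ⟨elemHom (ptAdd_coY Z) (s : (coY Z).obj X), ?_⟩
    apply hom_ext_pt
    intro Z' x
    erw [comp_app_pt, elemHom_app, coY_eval φ x, ← hts]
    show s ≫ ((cm f).app Z' x : X ⟶ Z') = t ≫ (x : Y ⟶ Z')
    erw [cm_app, ← Category.assoc, hs]

/-- every corepresentable is finitely presented (uses the zero object) -/
lemma fp_coY [HasZeroObject C] (V : C) : IsFinitelyPresentedOp (coY V) := by
  obtain ⟨Z0, hZ0⟩ := HasZeroObject.zero (C := C)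
  refine ⟨V, Z0, hZ0.from_ V, 𝟙 (coY V), ?_, ?_⟩
  · apply hom_eq_zero_pt
    intro Z' x
    rw [comp_app_pt]
    show hZ0.from_ V ≫ ((x : Z0 ⟶ Z')) = 0
    rw [hZ0.eq_of_src (x : Z0 ⟶ Z') 0, comp_zero]
  · intro T q hq
    exact ⟨q, Category.id_comp q, fun y hy => by rw [← hy, Category.id_comp]⟩

/-- the ambient zero-morphism structure on `ModOp C` -/
def ambientZero : HasZeroMorphisms (ModOp C) where
  zero A B := ⟨ObjectProperty.homMk (0 : A.obj ⟶ B.obj)⟩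
  comp_zero {A B} f Z := by
    have h : f.hom ≫ (0 : B.obj ⟶ Z.obj) = (0 : A.obj ⟶ Z.obj) :=
      hom_eq_zero_pt (fun k x => rfl)
    exact ObjectProperty.hom_ext _ h
  zero_comp A {B Z} f := by
    have h : (0 : A.obj ⟶ B.obj) ≫ f.hom = (0 : A.obj ⟶ Z.obj) :=
      hom_eq_zero_pt (fun k x => by rw [comp_app_pt]; exact map_zero _)
    exact ObjectProperty.hom_ext _ h

lemma modOp_zero_eq (I : HasZeroMorphisms (ModOp C)) (A B : ModOp C) :
    (@Limits.HasZeroMorphisms.zero _ _ I A B).zero.hom = (0 : A.obj ⟶ B.obj) := by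
  have h := Limits.HasZeroMorphisms.ext I ambientZero
  subst h
  rfl

/-- weak cokernels exist in `C`, given that `mod Cᵒᵖ` is abelian -/
lemma exists_weak_cokernel [HasZeroObject C] (hlc : Nonempty (Abelian (ModOp C)))
    {X Y : C} (f : X ⟶ Y) :
    ∃ (W : C) (g : Y ⟶ W), f ≫ g = 0 ∧
      ∀ ⦃Z : C⦄ (t : Y ⟶ Z), f ≫ t = 0 → ∃ v : W ⟶ Z, g ≫ v = t := by
  letI inst := hlc.some
  let A : ModOp C := ⟨coY Y, fp_coY Y⟩
  let B : ModOp C := ⟨coY X, fp_coY X⟩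
  let φ : A ⟶ B := ObjectProperty.homMk (cm f : coY Y ⟶ coY X)
  let KK : ModOp C := kernel φ
  let ι : KK.obj ⟶ coY Y := (kernel.ι φ : KK ⟶ A).hom
  have hι : ι ≫ (cm f) = (0 : KK.obj ⟶ coY X) :=
    (congrArg (fun m => m.hom) (kernel.condition φ)).trans (modOp_zero_eq _ KK B)
  obtain ⟨W, U, f', q, hq⟩ := KK.property
  have hqs : Surj q := cokπ_surj hq
  let η : coY W ⟶ coY Y := q ≫ ι
  let g : Y ⟶ W := (η.app W (𝟙 W : W ⟶ W) : Y ⟶ W)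
  have hη : ∀ ⦃Z : C⦄ (x : (coY W).obj Z), (η.app Z x : Y ⟶ Z) = g ≫ (x : W ⟶ Z) := by
    intro Z x
    rw [coY_eval η x]
    rfl
  refine ⟨W, g, ?_, ?_⟩
  · have h0 : η ≫ cm f = 0 := by
      show q ≫ ι ≫ cm f = 0
      rw [hι, comp_zero]
    have := congrArg (fun (m : (coY W).obj W ⟶ (coY X).obj W) => m (𝟙 W : W ⟶ W))
      (congrArg (fun m => NatTrans.app m W) h0)
    simp only [NatTrans.comp_app] at this
    have h1 : (cm f).app W (η.app W (𝟙 W : W ⟶ W)) = 0 := this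
    have h2 : f ≫ g = ((cm f).app W (η.app W (𝟙 W : W ⟶ W)) : X ⟶ W) := rfl
    rw [h2, h1]
    rfl
  · intro Z t ht
    have hψ0 : (cm t : coY Z ⟶ coY Y) ≫ cm f = 0 := by
      apply hom_eq_zero_pt
      intro Z' x
      rw [comp_app_pt]
      show f ≫ (t ≫ (x : Z ⟶ Z')) = 0
      erw [← Category.assoc, ht, zero_comp]
    let Tm : ModOp C := ⟨coY Z, fp_coY Z⟩
    let ψ : Tm ⟶ A := ObjectProperty.homMk (cm t)
    have hψ0' : ψ ≫ φ = (0 : Tm ⟶ B) := by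
      exact ObjectProperty.hom_ext _ (hψ0.trans (modOp_zero_eq inferInstance Tm B).symm)
    let k : Tm ⟶ KK := kernel.lift φ ψ hψ0'
    have hk : (k ≫ kernel.ι φ : Tm ⟶ A) = ψ := kernel.lift_ι φ ψ hψ0'
    let kA : coY Z ⟶ KK.obj := k.hom
    have hk' : kA ≫ ι = cm t := congrArg (fun m => m.hom) hk
    obtain ⟨w, hw⟩ := hqs Z (kA.app Z (𝟙 Z : Z ⟶ Z))
    refine ⟨(w : W ⟶ Z), ?_⟩
    have h5 : (η.app Z w : Y ⟶ Z) = g ≫ (w : W ⟶ Z) := hη w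
    have h6 : η.app Z w = (kA ≫ ι).app Z (𝟙 Z : Z ⟶ Z) := by
      show (q ≫ ι).app Z w = _
      rw [comp_app_pt, hw]
      rfl
    have h8 : ((kA ≫ ι).app Z (𝟙 Z : Z ⟶ Z) : Y ⟶ Z) = t := by
      rw [hk']
      show t ≫ 𝟙 Z = t
      exact Category.comp_id t
    exact h5.symm.trans (h6.trans h8)

lemma cm_comp_cm {X Y W : C} (f : X ⟶ Y) (g : Y ⟶ W) (hfg : f ≫ g = 0) :
    cm g ≫ cm f = 0 :=
  hom_eq_zero_pt fun Z x => by
    rw [comp_app_pt]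
    show f ≫ (g ≫ (x : W ⟶ Z)) = 0
    erw [← Category.assoc, hfg, zero_comp]

lemma fgproj_coY (V : C) : IsFGProjOp (coY V) :=
  ⟨V, 𝟙 _, 𝟙 _, Category.id_comp _⟩

lemma exactPt_wc {X Y W : C} (f : X ⟶ Y) (g : Y ⟶ W)
    (hwc : ∀ ⦃Z : C⦄ (t : Y ⟶ Z), f ≫ t = 0 → ∃ v : W ⟶ Z, g ≫ v = t) :
    ExactPt (cm g) (cm f) := by
  intro Z x hx
  have hx' : f ≫ (x : Y ⟶ Z) = 0 := hx
  obtain ⟨v, hv⟩ := hwc (x : Y ⟶ Z) hx'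
  exact ⟨(v : (coY W).obj Z), hv⟩

lemma std_res₃ {X Y W : C} (f : X ⟶ Y) (g : Y ⟶ W)
    (hfg : f ≫ g = 0)
    (hwc : ∀ ⦃Z : C⦄ (t : Y ⟶ Z), f ≫ t = 0 → ∃ v : W ⟶ Z, g ≫ v = t)
    {G : AmbOp C} (q : coY X ⟶ G) (hq : IsCokernelπ (cm f) q) :
    IsPartialProjResolutionOp (ComposableArrows.mk₃ (cm g) (cm f) q) G := by
  refine ⟨rfl, ?_, ?_, ?_⟩
  · intro j hj
    interval_cases j
    · exact fgproj_coY W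
    · exact fgproj_coY Y
    · exact fgproj_coY X
  · refine ComposableArrows.Exact.mk ⟨fun i hi => ?_⟩ (fun i hi => ?_)
    · have hi2 : i ≤ 1 := by omega
      interval_cases i
      · exact cm_comp_cm f g hfg
      · exact hq.1
    · have hi2 : i ≤ 1 := by omega
      interval_cases i
      · exact exact_of_exactPt _ (exactPt_wc f g hwc)
      · exact exact_of_exactPt _ (cokπ_exactPt hq)
  · exact cokπ_epi hq

lemma std_res₄ {X Y W V : C} (f : X ⟶ Y) (g : Y ⟶ W) (h : W ⟶ V)
    (hfg : f ≫ g = 0) (hgh : g ≫ h = 0)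
    (hwc : ∀ ⦃Z : C⦄ (t : Y ⟶ Z), f ≫ t = 0 → ∃ v : W ⟶ Z, g ≫ v = t)
    (hwc' : ∀ ⦃Z : C⦄ (t : W ⟶ Z), g ≫ t = 0 → ∃ v : V ⟶ Z, h ≫ v = t)
    {G : AmbOp C} (q : coY X ⟶ G) (hq : IsCokernelπ (cm f) q) :
    IsPartialProjResolutionOp (ComposableArrows.mk₄ (cm h) (cm g) (cm f) q) G := by
  refine ⟨rfl, ?_, ?_, ?_⟩
  · intro j hj
    interval_cases j
    · exact fgproj_coY V
    · exact fgproj_coY W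
    · exact fgproj_coY Y
    · exact fgproj_coY X
  · refine ComposableArrows.Exact.mk ⟨fun i hi => ?_⟩ (fun i hi => ?_)
    · have hi2 : i ≤ 2 := by omega
      interval_cases i
      · exact cm_comp_cm g h hgh
      · exact cm_comp_cm f g hfg
      · exact hq.1
    · have hi2 : i ≤ 2 := by omega
      interval_cases i
      · exact exact_of_exactPt _ (exactPt_wc g h hwc')
      · exact exact_of_exactPt _ (exactPt_wc f g hwc)
      · exact exact_of_exactPt _ (cokπ_exactPt hq)
  · exact cokπ_epi hq

abbrev ym {X Y : C} (f : X ⟶ Y) : yY X ⟶ yY Y := preadditiveYoneda.map f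

lemma ym_app {X Y Z : C} (f : X ⟶ Y) (x : (yY X).obj (op Z)) :
    ((ym f).app (op Z) x : Z ⟶ Y) = (x : Z ⟶ X) ≫ f := rfl

lemma yY_map_pt {Y' Z : C} (x : (yY Y').obj (op Z)) (u : (yY Y').obj (op Y')) :
    ((yY Y').map (x : Z ⟶ Y').op u : Z ⟶ Y') = (x : Z ⟶ Y') ≫ (u : Y' ⟶ Y') := rfl

lemma yY_id_elt {Y' Z : C} (x : (yY Y').obj (op Z)) :
    (yY Y').map (x : Z ⟶ Y').op (𝟙 Y' : Y' ⟶ Y') = x := by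
  show ((x : Z ⟶ Y') ≫ 𝟙 Y' : Z ⟶ Y') = x
  exact Category.comp_id _

lemma yY_eval {Y' : C} {B : AmbC C} (η : yY Y' ⟶ B) {Z : C} (x : (yY Y').obj (op Z)) :
    η.app (op Z) x = B.map (x : Z ⟶ Y').op (η.app (op Y') (𝟙 Y' : Y' ⟶ Y')) := by
  conv_lhs => rw [← yY_id_elt x]
  exact naturality_pt η (x : Z ⟶ Y').op (𝟙 Y' : Y' ⟶ Y')

/-- the morphism `Y ⟶ Y'` classified by `α : F ⟶ C(-,Y')` via the presentation `p` -/
def yEl {F : AmbC C} {Y : C} (p : yY Y ⟶ F) {Y' : C} (α : F ⟶ yY Y') : Y ⟶ Y' :=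
  ((p ≫ α).app (op Y) (𝟙 Y : Y ⟶ Y) : Y ⟶ Y')

lemma yEl_spec {F : AmbC C} {Y : C} (p : yY Y ⟶ F) {Y' : C} (α : F ⟶ yY Y')
    {Z : C} (x : (yY Y).obj (op Z)) :
    (α.app (op Z) (p.app (op Z) x) : Z ⟶ Y') = (x : Z ⟶ Y) ≫ yEl p α :=
  yY_eval (p ≫ α) x

lemma yEl_f {F : AmbC C} {X Y : C} {f : X ⟶ Y} {p : yY Y ⟶ F}
    (hp : IsCokernelπ (ym f) p) {Y' : C} (α : F ⟶ yY Y') :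
    f ≫ yEl p α = 0 := by
  have h0 : (ym f ≫ p) ≫ α = 0 := by rw [hp.1, zero_comp]
  have h1 := eq_zero_pt h0 (op X) (𝟙 X : X ⟶ X)
  have h2 : (α.app (op X) (p.app (op X) ((ym f).app (op X) (𝟙 X : X ⟶ X))) : X ⟶ Y')
      = (((ym f).app (op X) (𝟙 X : X ⟶ X)) : X ⟶ Y) ≫ yEl p α := yEl_spec p α _
  have h3 : (((ym f).app (op X) (𝟙 X : X ⟶ X)) : X ⟶ Y) = f := by
    erw [ym_app]; exact Category.id_comp f
  have h4 := h2.symm.trans h1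
  rw [h3] at h4
  exact h4

lemma ym_comp_ym {X Y W : C} (f : X ⟶ Y) (g : Y ⟶ W) (hfg : f ≫ g = 0) :
    ym f ≫ ym g = 0 :=
  hom_eq_zero_pt fun k x => by
    rw [comp_app_pt]
    show ((x : k.unop ⟶ X) ≫ f) ≫ g = 0
    erw [Category.assoc, hfg, comp_zero]

lemma yEl_of_comp {F : AmbC C} {Y W : C} {p : yY Y ⟶ F} {α₀ : F ⟶ yY W} {g : Y ⟶ W}
    (hα₀ : p ≫ α₀ = ym g) : yEl p α₀ = g := by
  show ((p ≫ α₀).app (op Y) (𝟙 Y : Y ⟶ Y) : Y ⟶ W) = g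
  rw [hα₀]
  show 𝟙 Y ≫ g = g
  exact Category.id_comp g

lemma unit_app_pt {F : AmbC C} {Z : C} (a : F.obj (op Z)) {Y' : C} (α : (dualR F).obj Y') :
    (((ddualUnit F).app (op Z) a : dualR F ⟶ coY Z)).app Y' α
      = (α : F ⟶ yY Y').app (op Z) a := rfl

lemma cond₁_of_inj {F : AmbC C} {X Y W : C} {f : X ⟶ Y} {p : yY Y ⟶ F}
    (hp : IsCokernelπ (ym f) p) (g : Y ⟶ W)
    (hwc : ∀ ⦃Z : C⦄ (t : Y ⟶ Z), f ≫ t = 0 → ∃ v : W ⟶ Z, g ≫ v = t) (Z : C)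
    (hinj : Function.Injective ((ddualUnit F).app (op Z))) :
    ∀ t : Z ⟶ Y, t ≫ g = 0 → ∃ s : Z ⟶ X, s ≫ f = t := by
  intro t ht
  have hU : ((ddualUnit F).app (op Z)) (p.app (op Z) (t : (yY Y).obj (op Z))) = 0 := by
    have h0 : (((ddualUnit F).app (op Z) (p.app (op Z) (t : (yY Y).obj (op Z))) :
        dualR F ⟶ coY Z)) = 0 := by
      apply hom_eq_zero_pt
      intro Y' α
      have h2 : ((α : F ⟶ yY Y').app (op Z) (p.app (op Z) (t : (yY Y).obj (op Z))) : Z ⟶ Y')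
          = t ≫ yEl p (α : F ⟶ yY Y') := yEl_spec p _ _
      obtain ⟨v, hv⟩ := hwc (yEl p (α : F ⟶ yY Y')) (yEl_f hp _)
      have h3 : t ≫ yEl p (α : F ⟶ yY Y') = 0 := by
        rw [← hv, ← Category.assoc, ht, zero_comp]
      exact h2.trans h3
    exact h0
  have ha : p.app (op Z) (t : (yY Y).obj (op Z)) = 0 := by
    apply hinj
    rw [hU, map_zero]
  obtain ⟨sE, hsE⟩ := cokπ_exactPt hp (op Z) (t : (yY Y).obj (op Z)) ha
  refine ⟨(sE : Z ⟶ X), ?_⟩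
  exact hsE

lemma inj_of_cond₁ {F : AmbC C} {X Y W : C} {f : X ⟶ Y} {p : yY Y ⟶ F}
    (hp : IsCokernelπ (ym f) p) {g : Y ⟶ W} {α₀ : F ⟶ yY W} (hα₀ : p ≫ α₀ = ym g) (Z : C)
    (hc : ∀ t : Z ⟶ Y, t ≫ g = 0 → ∃ s : Z ⟶ X, s ≫ f = t) :
    Function.Injective ((ddualUnit F).app (op Z)) := by
  rw [injective_iff_map_eq_zero]
  intro a ha
  obtain ⟨tE, htE⟩ := cokπ_surj hp (op Z) a
  have h1 : ((ddualUnit F).app (op Z) a : dualR F ⟶ coY Z) = 0 := ha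
  have h2 := eq_zero_pt h1 W (α₀ : (dualR F).obj W)
  rw [← htE] at h2
  have h3 : (α₀.app (op Z) (p.app (op Z) tE) : Z ⟶ W) = (tE : Z ⟶ Y) ≫ yEl p α₀ :=
    yEl_spec p α₀ tE
  have h4 : (tE : Z ⟶ Y) ≫ g = 0 := by
    rw [← yEl_of_comp hα₀, ← h3]
    exact h2
  obtain ⟨s, hs⟩ := hc _ h4
  have h5 : (ym f ≫ p).app (op Z) (s : (yY X).obj (op Z)) = a := by
    erw [comp_app_pt]
    have h6 : ((ym f).app (op Z) (s : (yY X).obj (op Z))) = tE := hs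
    rw [h6, htE]
  rw [← h5, hp.1]
  rfl

lemma yEl_add {F : AmbC C} {Y : C} (p : yY Y ⟶ F) {Y' : C} (α α' : (dualR F).obj Y') :
    yEl p ((α + α' : (dualR F).obj Y') : F ⟶ yY Y')
      = yEl p (α : F ⟶ yY Y') + yEl p (α' : F ⟶ yY Y') := rfl

lemma yEl_comp {F : AmbC C} {Y : C} (p : yY Y ⟶ F) {Y' Y'' : C} (α : F ⟶ yY Y')
    (k : Y' ⟶ Y'') : yEl p (α ≫ ym k) = yEl p α ≫ k := rfl

lemma dualR_map_pt {F : AmbC C} {Y' Y'' : C} (k : Y' ⟶ Y'') (α : (dualR F).obj Y') :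
    ((dualR F).map k α : F ⟶ yY Y'') = (α : F ⟶ yY Y') ≫ ym k := rfl

lemma surj_of_cond₂ {F : AmbC C} {X Y W : C} {f : X ⟶ Y} {p : yY Y ⟶ F}
    (hp : IsCokernelπ (ym f) p) {g : Y ⟶ W} {α₀ : F ⟶ yY W} (hα₀ : p ≫ α₀ = ym g)
    {V : C} {h : W ⟶ V} (hgh : g ≫ h = 0)
    (hwc : ∀ ⦃Z' : C⦄ (t : Y ⟶ Z'), f ≫ t = 0 → ∃ v : W ⟶ Z', g ≫ v = t) (Z : C)
    (hc : ∀ t : Z ⟶ W, t ≫ h = 0 → ∃ s : Z ⟶ Y, s ≫ g = t) :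
    Function.Surjective ((ddualUnit F).app (op Z)) := by
  intro β0
  have hepi := cokπ_epi hp
  let β : dualR F ⟶ coY Z := β0
  let t : Z ⟶ W := (β.app W (α₀ : (dualR F).obj W) : Z ⟶ W)
  have stepA : ∀ ⦃Z' : C⦄ (u : W ⟶ Z'), g ≫ u = 0 → t ≫ u = 0 := by
    intro Z' u hu
    have hαu : α₀ ≫ ym u = 0 := by
      apply (cancel_epi p).1
      rw [← Category.assoc, hα₀, comp_zero]
      exact ym_comp_ym g u hu
    have hnat := naturality_pt β u (α₀ : (dualR F).obj W)
    have h6 : (dualR F).map u (α₀ : (dualR F).obj W) = (0 : (dualR F).obj Z') := by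
      show α₀ ≫ ym u = 0
      exact hαu
    rw [h6, map_zero] at hnat
    have h7 : ((coY Z).map u (β.app W (α₀ : (dualR F).obj W)) : Z ⟶ Z') = t ≫ u := rfl
    rw [← h7]
    exact hnat.symm
  have hth : t ≫ h = 0 := stepA h hgh
  obtain ⟨s, hs⟩ := hc t hth
  refine ⟨p.app (op Z) (s : (yY Y).obj (op Z)), ?_⟩
  have key : (((ddualUnit F).app (op Z) (p.app (op Z) (s : (yY Y).obj (op Z)))) :
      dualR F ⟶ coY Z) = β := by
    apply hom_ext_pt
    intro Y' α
    obtain ⟨v, hv⟩ := hwc (yEl p (α : F ⟶ yY Y')) (yEl_f hp _)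
    have hαv : (α : F ⟶ yY Y') = α₀ ≫ ym v := by
      apply (cancel_epi p).1
      apply hom_ext_pt
      intro k x
      have hL : ((α : F ⟶ yY Y').app k (p.app k x) : k.unop ⟶ Y')
          = (x : k.unop ⟶ Y) ≫ yEl p (α : F ⟶ yY Y') := yEl_spec p _ x
      have hR : ((p ≫ α₀ ≫ ym v).app k x : k.unop ⟶ Y')
          = ((x : k.unop ⟶ Y) ≫ g) ≫ v := by
        have h8 : (p ≫ α₀).app k x = (ym g).app k x := by rw [hα₀]
        have h9 : (p ≫ α₀ ≫ ym v).app k x = (ym v).app k ((p ≫ α₀).app k x) := rfl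
        rw [h9, h8]
        rfl
      erw [comp_app_pt, hL, hR, Category.assoc, hv]
    have hβα : (β.app Y' α : Z ⟶ Y') = t ≫ v := by
      have hnat := naturality_pt β v (α₀ : (dualR F).obj W)
      have h6 : (dualR F).map v (α₀ : (dualR F).obj W) = α := by
        show α₀ ≫ ym v = _
        exact hαv.symm
      rw [h6] at hnat
      exact hnat
    have hL2 : (((ddualUnit F).app (op Z) (p.app (op Z) (s : (yY Y).obj (op Z)))) :
        dualR F ⟶ coY Z).app Y' α
        = (α : F ⟶ yY Y').app (op Z) (p.app (op Z) (s : (yY Y).obj (op Z))) := rfl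
    rw [hL2]
    have hL3 : ((α : F ⟶ yY Y').app (op Z) (p.app (op Z) (s : (yY Y).obj (op Z))) : Z ⟶ Y')
        = s ≫ yEl p (α : F ⟶ yY Y') := yEl_spec p _ _
    have hL4 : s ≫ yEl p (α : F ⟶ yY Y') = t ≫ v := by
      rw [← hv, ← Category.assoc, hs]
    exact hL3.trans (hL4.trans hβα.symm)
  exact key

lemma cond₂_of_surj {F : AmbC C} {X Y W V : C} {f : X ⟶ Y} {p : yY Y ⟶ F}
    (hp : IsCokernelπ (ym f) p) {g : Y ⟶ W} {α₀ : F ⟶ yY W} (hα₀ : p ≫ α₀ = ym g)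
    {h : W ⟶ V}
    (hwc : ∀ ⦃Z' : C⦄ (t : Y ⟶ Z'), f ≫ t = 0 → ∃ v : W ⟶ Z', g ≫ v = t)
    (hwch : ∀ ⦃Z' : C⦄ (t : W ⟶ Z'), g ≫ t = 0 → ∃ v : V ⟶ Z', h ≫ v = t) (Z : C)
    (hsur : Function.Surjective ((ddualUnit F).app (op Z))) :
    ∀ t : Z ⟶ W, t ≫ h = 0 → ∃ s : Z ⟶ Y, s ≫ g = t := by
  intro t ht
  have wd : ∀ ⦃Z' : C⦄ (u u' : W ⟶ Z'), g ≫ u = g ≫ u' → t ≫ u = t ≫ u' := by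
    intro Z' u u' huu
    have h1 : g ≫ (u - u') = 0 := by rw [Preadditive.comp_sub, huu, sub_self]
    obtain ⟨w, hw⟩ := hwch (u - u') h1
    have h2 : t ≫ (u - u') = 0 := by rw [← hw, ← Category.assoc, ht, zero_comp]
    rw [Preadditive.comp_sub, sub_eq_zero] at h2
    exact h2
  have hch : ∀ {Y' : C} (α : F ⟶ yY Y'), ∃ v : W ⟶ Y', g ≫ v = yEl p α :=
    fun α => hwc _ (yEl_f hp α)
  classical
  let β : dualR F ⟶ coY Z :=
    { app := fun Y' => AddCommGrpCat.ofHom (AddMonoidHom.mk'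
        (fun α => ((t ≫ (hch (α : F ⟶ yY Y')).choose : Z ⟶ Y') : (coY Z).obj Y'))
        (by
          intro α α'
          show t ≫ (hch _).choose = ((t ≫ (hch _).choose) + (t ≫ (hch _).choose) : Z ⟶ Y')
          erw [← Preadditive.comp_add]
          apply wd
          rw [(hch _).choose_spec, Preadditive.comp_add, (hch _).choose_spec,
            (hch _).choose_spec]
          exact yEl_add p α α'))
      naturality := by
        intro Y' Y'' k
        ext α
        show t ≫ (hch _).choose = ((t ≫ (hch ((α : F ⟶ yY Y'))).choose) ≫ k : Z ⟶ Y'')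
        rw [Category.assoc]
        apply wd
        erw [(hch _).choose_spec, ← Category.assoc, (hch _).choose_spec]
        have : ((((dualR F).map k α : (dualR F).obj Y'')) : F ⟶ yY Y'')
            = (α : F ⟶ yY Y') ≫ ym k := rfl
        erw [this]
        exact yEl_comp p _ k }
  obtain ⟨a, ha⟩ := hsur (β : ((ddual F).obj (op Z)))
  obtain ⟨t₀, ht₀⟩ := cokπ_surj hp (op Z) a
  refine ⟨(t₀ : Z ⟶ Y), ?_⟩
  have h1 : ((ddualUnit F).app (op Z) a : dualR F ⟶ coY Z) = β := ha
  rw [← ht₀] at h1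
  have h2 : (((ddualUnit F).app (op Z) (p.app (op Z) t₀) : dualR F ⟶ coY Z)).app W
      (α₀ : (dualR F).obj W) = β.app W (α₀ : (dualR F).obj W) := by rw [h1]
  have h3 : ((α₀.app (op Z) (p.app (op Z) t₀)) : Z ⟶ W) = (t₀ : Z ⟶ Y) ≫ g := by
    have := yEl_spec p α₀ t₀
    rw [yEl_of_comp hα₀] at this
    exact this
  have h4 : t ≫ (hch (((α₀ : (dualR F).obj W) : F ⟶ yY W))).choose = t := by
    have h5 := wd (hch (((α₀ : (dualR F).obj W) : F ⟶ yY W))).choose (𝟙 W)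
      (by rw [(hch _).choose_spec, Category.comp_id]
          exact yEl_of_comp hα₀)
    rw [h5, Category.comp_id]
  have h7 : (((ddualUnit F).app (op Z) (p.app (op Z) t₀) : dualR F ⟶ coY Z)).app W
      (α₀ : (dualR F).obj W) = α₀.app (op Z) (p.app (op Z) t₀) := rfl
  have h8 : (β.app W (α₀ : (dualR F).obj W) : Z ⟶ W)
      = t ≫ (hch (((α₀ : (dualR F).obj W) : F ⟶ yY W))).choose := rfl
  exact h3.symm.trans ((h7.symm.trans h2).trans (h8.trans h4))

end Pre
end Paper13


open Paper13 CategoryTheory.Limits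

/-- For a coherent category `C` and a finitely presented contravariant functor `F`:
`F` is `1`-torsion free iff it embeds into a projective object of `mod C`, and `F` is
`2`-torsion free iff the canonical map `F ⟶ F**` is an isomorphism. -/
theorem stmt_13 {C : Type u} [Category.{u} C] [Preadditive C] [HasZeroObject C]
    [HasFiniteBiproducts C] [IsIdempotentComplete C]
    (hrc : Nonempty (Abelian (ModC C))) (hlc : Nonempty (Abelian (ModOp C)))
    (F : AmbC C) (hF : IsFinitelyPresented F) :
    (IsTorsionFree F 1 ↔ ∃ (P : AmbC C) (ι : F ⟶ P), IsFGProj P ∧ Mono ι) ∧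
    (IsTorsionFree F 2 ↔ IsIso (ddualUnit F)) := by
  classical
  obtain ⟨X, Y, f, p, hp⟩ := hF
  obtain ⟨W, g, hfg, hwc⟩ := exists_weak_cokernel hlc f
  obtain ⟨V, h, hgh, hwch⟩ := exists_weak_cokernel hlc g
  obtain ⟨α₀, hα₀, -⟩ := hp.2 (ym g) (ym_comp_ym f g hfg)
  have hq := isCokernelπ_cokernelπ (cm f)
  constructor
  · constructor
    · rintro ⟨G, ⟨X', Y', f', p', q', hp', hq'⟩, hres⟩
      obtain ⟨R, ⟨hG3, hproj, hexact, hepi⟩, hRvan⟩ := hres 1 le_rfl le_rfl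
      obtain ⟨W', g', hfg', hwc'⟩ := exists_weak_cokernel hlc f'
      have cond : ∀ Z : C, ∀ t : Z ⟶ Y', t ≫ g' = 0 → ∃ s, s ≫ f' = t := by
        intro Z
        rw [← extVan_iff_cond f' g']
        intro φ hφ
        refine transfer₁ (R.map' 0 1) (R.map' 1 2)
          (R.map' 2 3 ≫ eqToHom hG3) (cm g') (cm f') q'
          (hproj 2 (by omega)) (hproj 1 (by omega)) (hproj 0 (by omega))
          (fgproj_coY X') (fgproj_coY Y') (fgproj_coY W')
          (hexact.toIsComplex.zero 0 (by omega))
          (by rw [← Category.assoc, hexact.toIsComplex.zero 1 (by omega), zero_comp])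
          hq'.1
          (exactPt_of_exact (hexact.exact 0 (by omega)))
          (exactPt_comp_eqToHom hG3 (exactPt_of_exact (hexact.exact 1 (by omega))))
          (exactPt_wc f' g' hwc')
          (cokπ_exactPt hq')
          (surj_comp_eqToHom hG3 (by have := hepi; exact surj_of_epi _))
          (cokπ_surj hq')
          (hRvan Z) φ hφ
      obtain ⟨ι, hι, -⟩ := hp'.2 (ym g') (ym_comp_ym f' g' hfg')
      refine ⟨yY W', ι, ⟨W', 𝟙 _, 𝟙 _, Category.id_comp _⟩, ?_⟩
      apply mono_of_inj
      intro k
      rw [injective_iff_map_eq_zero]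
      intro a ha
      obtain ⟨tE, htE⟩ := cokπ_surj hp' k a
      have h1 : ι.app k (p'.app k tE) = (ym g').app k tE := by
        rw [← comp_app_pt, hι]
      rw [← htE, h1] at ha
      have h2 : (tE : k.unop ⟶ Y') ≫ g' = 0 := ha
      obtain ⟨s, hs⟩ := cond k.unop (tE : k.unop ⟶ Y') h2
      have h3 : (ym f').app k ((s : k.unop ⟶ X') : (yY X').obj k) = tE := hs
      erw [← htE, ← h3, ← comp_app_pt, hp'.1]
      rfl
    · rintro ⟨P, ι, hP, hmono⟩
      refine ⟨cokernel (cm f), ⟨X, Y, f, p, cokernel.π _, hp, hq⟩, ?_⟩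
      intro i hi1 hi2
      obtain rfl : i = 1 := le_antisymm hi2 hi1
      refine ⟨ComposableArrows.mk₃ (cm g) (cm f) (cokernel.π _),
        std_res₃ f g hfg hwc _ hq, ?_⟩
      intro Z
      show ExtVanishesAt (cm g) (cm f) (coY Z)
      rw [extVan_iff_cond f g]
      intro t ht
      obtain ⟨V', sP, rP, hsr⟩ := hP
      obtain ⟨v, hv⟩ := hwc (yEl p (ι ≫ sP)) (yEl_f hp (ι ≫ sP))
      have h1 : ((ι ≫ sP).app (op Z) (p.app (op Z) (t : (yY Y).obj (op Z))) : Z ⟶ V')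
          = t ≫ yEl p (ι ≫ sP) := yEl_spec p (ι ≫ sP) _
      have h2 : t ≫ yEl p (ι ≫ sP) = 0 := by
        rw [← hv, ← Category.assoc, ht, zero_comp]
      have h3 : sP.app (op Z) (ι.app (op Z) (p.app (op Z) (t : (yY Y).obj (op Z)))) = 0 := by
        have h4 : (ι ≫ sP).app (op Z) (p.app (op Z) (t : (yY Y).obj (op Z)))
            = sP.app (op Z) (ι.app (op Z) (p.app (op Z) (t : (yY Y).obj (op Z)))) := rfl
        rw [← h4]
        exact h1.trans h2
      have h5 : ι.app (op Z) (p.app (op Z) (t : (yY Y).obj (op Z))) = 0 := by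
        apply split_inj sP rP hsr (op Z)
        rw [h3, map_zero]
      have h6 : p.app (op Z) (t : (yY Y).obj (op Z)) = 0 := by
        have hm : Mono ι := hmono
        exact inj_of_mono ι (op Z) (by rw [h5, map_zero])
      obtain ⟨sE, hsE⟩ := cokπ_exactPt hp (op Z) _ h6
      exact ⟨(sE : Z ⟶ X), hsE⟩
  · constructor
    · rintro ⟨G, ⟨X', Y', f', p', q', hp', hq'⟩, hres⟩
      obtain ⟨W', g', hfg', hwc'⟩ := exists_weak_cokernel hlc f'
      obtain ⟨V', h', hgh', hwch'⟩ := exists_weak_cokernel hlc g'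
      obtain ⟨α₀', hα₀', -⟩ := hp'.2 (ym g') (ym_comp_ym f' g' hfg')
      obtain ⟨R, ⟨hG3, hproj, hexact, hepi⟩, hRvan⟩ := hres 1 le_rfl (by omega)
      have cond1 : ∀ Z : C, ∀ t : Z ⟶ Y', t ≫ g' = 0 → ∃ s, s ≫ f' = t := by
        intro Z
        rw [← extVan_iff_cond f' g']
        intro φ hφ
        refine transfer₁ (R.map' 0 1) (R.map' 1 2)
          (R.map' 2 3 ≫ eqToHom hG3) (cm g') (cm f') q'
          (hproj 2 (by omega)) (hproj 1 (by omega)) (hproj 0 (by omega))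
          (fgproj_coY X') (fgproj_coY Y') (fgproj_coY W')
          (hexact.toIsComplex.zero 0 (by omega))
          (by rw [← Category.assoc, hexact.toIsComplex.zero 1 (by omega), zero_comp])
          hq'.1
          (exactPt_of_exact (hexact.exact 0 (by omega)))
          (exactPt_comp_eqToHom hG3 (exactPt_of_exact (hexact.exact 1 (by omega))))
          (exactPt_wc f' g' hwc')
          (cokπ_exactPt hq')
          (surj_comp_eqToHom hG3 (by have := hepi; exact surj_of_epi _))
          (cokπ_surj hq')
          (hRvan Z) φ hφ
      obtain ⟨R2, ⟨hG4, hproj2, hexact2, hepi2⟩, hRvan2⟩ := hres 2 (by omega) le_rfl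
      have cond2 : ∀ Z : C, ∀ t : Z ⟶ W', t ≫ h' = 0 → ∃ s, s ≫ g' = t := by
        intro Z
        rw [← extVan_iff_cond g' h']
        intro φ hφ
        refine transfer₂ (R2.map' 0 1) (R2.map' 1 2) (R2.map' 2 3)
          (R2.map' 3 4 ≫ eqToHom hG4)
          (cm h') (cm g') (cm f') q'
          (hproj2 3 (by omega)) (hproj2 2 (by omega)) (hproj2 1 (by omega))
          (hproj2 0 (by omega))
          (fgproj_coY X') (fgproj_coY Y') (fgproj_coY W') (fgproj_coY V')
          (hexact2.toIsComplex.zero 0 (by omega)) (hexact2.toIsComplex.zero 1 (by omega))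
          (by rw [← Category.assoc, hexact2.toIsComplex.zero 2 (by omega), zero_comp])
          (cm_comp_cm f' g' hfg') hq'.1
          (exactPt_of_exact (hexact2.exact 0 (by omega)))
          (exactPt_of_exact (hexact2.exact 1 (by omega)))
          (exactPt_comp_eqToHom hG4 (exactPt_of_exact (hexact2.exact 2 (by omega))))
          (exactPt_wc g' h' hwch')
          (exactPt_wc f' g' hwc')
          (cokπ_exactPt hq')
          (surj_comp_eqToHom hG4 (by have := hepi2; exact surj_of_epi _))
          (cokπ_surj hq')
          (hRvan2 Z) φ hφ
      apply isIso_of_bij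
      intro k
      rcases k with ⟨Z⟩
      exact ⟨inj_of_cond₁ hp' hα₀' Z (cond1 Z),
        surj_of_cond₂ hp' hα₀' hgh' hwc' Z (cond2 Z)⟩
    · intro hiso
      refine ⟨cokernel (cm f), ⟨X, Y, f, p, cokernel.π _, hp, hq⟩, ?_⟩
      intro i hi1 hi2
      interval_cases i
      · refine ⟨ComposableArrows.mk₃ (cm g) (cm f) (cokernel.π _),
          std_res₃ f g hfg hwc _ hq, ?_⟩
        intro Z
        show ExtVanishesAt (cm g) (cm f) (coY Z)
        rw [extVan_iff_cond f g]
        exact cond₁_of_inj hp g hwc Z (bij_of_isIso (ddualUnit F) (op Z)).1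
      · refine ⟨ComposableArrows.mk₄ (cm h) (cm g) (cm f) (cokernel.π _),
          std_res₄ f g h hfg hgh hwc hwch _ hq, ?_⟩
        intro Z
        show ExtVanishesAt (cm h) (cm g) (coY Z)
        rw [extVan_iff_cond g h]
        exact cond₂_of_surj hp hα₀ hwc hwch Z (bij_of_isIso (ddualUnit F) (op Z)).2
end

section
/- Let C be an additive idempotent complete category. If C is m-abelian and n-abelian for two distinct positive integers m and n, then C is von Neumann regular; conversely, a von Neumann regular category is n-abelian for every positive integer n. -/
open CategoryTheory CategoryTheory.Limits

open Paper

namespace PaperAux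
set_option linter.unusedSectionVars false

open Paper CategoryTheory CategoryTheory.Limits

variable {C : Type*} [Category C] [Preadditive C]

lemma mono_of_isZero_src {X Y : C} (hX : IsZero X) (f : X ⟶ Y) : Mono f :=
  ⟨fun g h _ => hX.eq_of_tgt g h⟩

lemma epi_of_isZero_tgt {X Y : C} (hY : IsZero Y) (f : X ⟶ Y) : Epi f :=
  ⟨fun g h _ => hY.eq_of_src g h⟩

lemma epi_conj {X Y X' Y' : C} (e1 : X' = X) (f : X ⟶ Y) (e2 : Y = Y') (h : Epi f) :
    Epi (eqToHom e1 ≫ f ≫ eqToHom e2) := by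
  subst e1; subst e2; simpa using h

lemma mono_conj {X Y X' Y' : C} (e1 : X' = X) (f : X ⟶ Y) (e2 : Y = Y') (h : Mono f) :
    Mono (eqToHom e1 ≫ f ≫ eqToHom e2) := by
  subst e1; subst e2; simpa using h

lemma epi_of_conj_eq {X Y X' Y' : C} {g : X' ⟶ Y'} (e1 : X' = X) (f : X ⟶ Y) (e2 : Y = Y')
    (hg : g = eqToHom e1 ≫ f ≫ eqToHom e2) (h : Epi f) : Epi g := by
  rw [hg]; exact epi_conj e1 f e2 h

lemma mono_of_conj_eq {X Y X' Y' : C} {g : X' ⟶ Y'} (e1 : X' = X) (f : X ⟶ Y) (e2 : Y = Y')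
    (hg : g = eqToHom e1 ≫ f ≫ eqToHom e2) (h : Mono f) : Mono g := by
  rw [hg]; exact mono_conj e1 f e2 h

lemma obj'_congr {m : ℕ} (T : ComposableArrows C m) {a a' : ℕ} (h : a = a')
    (ha : a ≤ m) (ha' : a' ≤ m) : T.obj' a ha = T.obj' a' ha' := by subst h; rfl

lemma map'_congr {m : ℕ} (T : ComposableArrows C m) {a b a' b' : ℕ} (ha : a = a') (hb : b = b')
    (hab : a ≤ b) (hbm : b ≤ m) (hab' : a' ≤ b') (hbm' : b' ≤ m) :
    T.map' a b hab hbm =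
      eqToHom (obj'_congr T ha (hab.trans hbm) (hab'.trans hbm')) ≫ T.map' a' b' hab' hbm' ≫
        eqToHom (obj'_congr T hb.symm hbm' hbm) := by
  subst ha; subst hb; simp

lemma map_eq_conj {m : ℕ} (T : ComposableArrows C m) {x y : Fin (m+1)} (hxy : x ≤ y)
    (a b : ℕ) (ha : x.1 = a) (hb : y.1 = b) (hab : a ≤ b) (hbm : b ≤ m)
    (e1 : T.obj x = T.obj' a (hab.trans hbm)) (e2 : T.obj' b hbm = T.obj y) :
    T.map (homOfLE hxy) = eqToHom e1 ≫ T.map' a b hab hbm ≫ eqToHom e2 := by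
  obtain ⟨x, hx⟩ := x; obtain ⟨y, hy⟩ := y
  dsimp at ha hb
  subst ha; subst hb
  have h1 : T.map' x y hab hbm = T.map (homOfLE hxy) := rfl
  rw [h1]
  simp

end PaperAux
namespace PaperAux

open Paper CategoryTheory CategoryTheory.Limits

variable {C : Type*} [Category C] [Preadditive C]

/-- The "partial contracting homotopy" invariant at position `i`. -/
def Inv {m : ℕ} (T : ComposableArrows C m) (i : ℕ) (h : i + 1 ≤ m) : Prop :=
  ∃ g : T.obj' (i+1) h ⟶ T.obj' i (by omega),
    T.map' i (i+1) (by omega) h ≫ g ≫ T.map' i (i+1) (by omega) h = T.map' i (i+1) (by omega) h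

lemma inv_congr {m : ℕ} (T : ComposableArrows C m) {i i' : ℕ} (h : i = i')
    (hi : i + 1 ≤ m) (hi' : i' + 1 ≤ m) (hI : Inv T i hi) : Inv T i' hi' := by
  subst h; exact hI

lemma inv_ascend {m : ℕ} (T : ComposableArrows C m)
    (hCoY : ∀ i (h : i+2 ≤ m), CoYExactAt T i h)
    (h0' : 1 ≤ m) (h0 : Inv T 0 h0') :
    ∀ i (h : i+1 ≤ m), Inv T i h := by
  intro i
  induction i with
  | zero => intro h; exact h0
  | succ i ih =>
    intro h
    obtain ⟨g, hg⟩ := ih (by omega)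
    have hz : T.map' i (i+1) (by omega) (by omega) ≫ T.map' (i+1) (i+2) (by omega) h = 0 :=
      (hCoY i h).1
    have hu : T.map' i (i+1) (by omega) (by omega) ≫
        (𝟙 _ - g ≫ T.map' i (i+1) (by omega) (by omega)) = 0 := by
      simp only [Preadditive.comp_sub, Category.comp_id, ← Category.assoc]
      rw [Category.assoc, hg, sub_self]
    obtain ⟨v, hv⟩ := (hCoY i h).2 _ (𝟙 _ - g ≫ T.map' i (i+1) (by omega) (by omega)) hu
    refine ⟨v, ?_⟩
    rw [reassoc_of% hv]
    simp only [Preadditive.sub_comp, Category.id_comp, Category.assoc, hz, comp_zero, sub_zero]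

lemma inv_step_down {m : ℕ} (T : ComposableArrows C m) (i : ℕ) (h : i + 2 ≤ m)
    (hY : YExactAt T i h) (hI : Inv T (i+1) h) : Inv T i (by omega) := by
  obtain ⟨g, hg⟩ := hI
  have hx : (𝟙 _ - T.map' (i+1) (i+2) (by omega) h ≫ g) ≫
      T.map' (i+1) (i+2) (by omega) h = 0 := by
    simp only [Preadditive.sub_comp, Category.id_comp, Category.assoc, hg, sub_self]
  obtain ⟨v, hv⟩ := hY.2 _ (𝟙 _ - T.map' (i+1) (i+2) (by omega) h ≫ g) hx
  refine ⟨v, ?_⟩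
  rw [hv]
  simp only [Preadditive.comp_sub, Category.comp_id, reassoc_of% hY.1, zero_comp, sub_zero]

lemma inv_descend {m : ℕ} (T : ComposableArrows C m)
    (hY : ∀ i (h : i+2 ≤ m), YExactAt T i h) (ℓ : ℕ) (hℓ : ℓ + 1 ≤ m)
    (htop : Inv T ℓ hℓ) :
    ∀ j i (hij : i + j = ℓ), Inv T i (by omega) := by
  intro j
  induction j with
  | zero => intro i hij; exact inv_congr T (by omega) hℓ _ htop
  | succ j ih =>
    intro i hij
    have h1 : Inv T (i+1) (by omega) := ih (i+1) (by omega)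
    exact inv_step_down T i (by omega) (hY i (by omega)) h1

lemma yexact_of_inv {m : ℕ} (T : ComposableArrows C m) (i : ℕ) (h : i + 2 ≤ m)
    (hI : Inv T i (by omega)) (hCoY : CoYExactAt T i h) : YExactAt T i h := by
  obtain ⟨g, hg⟩ := hI
  refine ⟨hCoY.1, fun W w hw => ⟨w ≫ g, ?_⟩⟩
  have hu : T.map' i (i+1) (by omega) (by omega) ≫
      (𝟙 _ - g ≫ T.map' i (i+1) (by omega) (by omega)) = 0 := by
    simp only [Preadditive.comp_sub, Category.comp_id, ← Category.assoc]
    rw [Category.assoc, hg, sub_self]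
  obtain ⟨v, hv⟩ := hCoY.2 _ (𝟙 _ - g ≫ T.map' i (i+1) (by omega) (by omega)) hu
  have h2 : w ≫ (𝟙 _ - g ≫ T.map' i (i+1) (by omega) (by omega)) = 0 := by
    rw [← hv, ← Category.assoc, hw, zero_comp]
  have h3 : w ≫ (g ≫ T.map' i (i+1) (by omega) (by omega)) =
      w - w ≫ (𝟙 _ - g ≫ T.map' i (i+1) (by omega) (by omega)) := by
    simp [Preadditive.comp_sub]
  rw [Category.assoc, h3, h2, sub_zero]

lemma coy_of_inv {m : ℕ} (T : ComposableArrows C m) (i : ℕ) (h : i + 2 ≤ m)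
    (hI : Inv T (i+1) h) (hY : YExactAt T i h) : CoYExactAt T i h := by
  obtain ⟨g, hg⟩ := hI
  refine ⟨hY.1, fun W u hu => ⟨g ≫ u, ?_⟩⟩
  have hx : (𝟙 _ - T.map' (i+1) (i+2) (by omega) h ≫ g) ≫
      T.map' (i+1) (i+2) (by omega) h = 0 := by
    simp only [Preadditive.sub_comp, Category.id_comp, Category.assoc, hg, sub_self]
  obtain ⟨v, hv⟩ := hY.2 _ (𝟙 _ - T.map' (i+1) (i+2) (by omega) h ≫ g) hx
  have h2 : (𝟙 _ - T.map' (i+1) (i+2) (by omega) h ≫ g) ≫ u = 0 := by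
    rw [← hv, Category.assoc, hu, comp_zero]
  have h3 : T.map' (i+1) (i+2) (by omega) h ≫ g ≫ u =
      u - (𝟙 _ - T.map' (i+1) (i+2) (by omega) h ≫ g) ≫ u := by
    simp [Preadditive.sub_comp]
  rw [h3, h2, sub_zero]

end PaperAux
namespace PaperAux

open Paper CategoryTheory CategoryTheory.Limits

variable {C : Type*} [Category C] [Preadditive C]

lemma vnr_epi_split (h : VonNeumannRegular C) {X Y : C} (f : X ⟶ Y) (hf : Epi f) :
    IsSplitEpi f := by
  obtain ⟨W, p, j, hp, hj, hpj⟩ := h f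
  haveI := hp; haveI := hj
  have hje : Epi j := by
    rw [← hpj] at hf
    exact epi_of_epi p j
  have hrj : retraction j ≫ j = 𝟙 Y := by
    rw [← cancel_epi j, ← Category.assoc, IsSplitMono.id, Category.id_comp, Category.comp_id]
  refine IsSplitEpi.mk' ⟨retraction j ≫ section_ p, ?_⟩
  rw [← hpj, Category.assoc, ← Category.assoc (section_ p), IsSplitEpi.id, Category.id_comp, hrj]

lemma vnr_mono_split (h : VonNeumannRegular C) {X Y : C} (f : X ⟶ Y) (hf : Mono f) :
    IsSplitMono f := by
  obtain ⟨W, p, j, hp, hj, hpj⟩ := h f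
  haveI := hp; haveI := hj
  have hpm : Mono p := by
    rw [← hpj] at hf
    exact mono_of_mono p j
  have hsp : p ≫ section_ p = 𝟙 X := by
    rw [← cancel_mono p, Category.assoc, IsSplitEpi.id, Category.id_comp, Category.comp_id]
  refine IsSplitMono.mk' ⟨retraction j ≫ section_ p, ?_⟩
  rw [← hpj, Category.assoc, ← Category.assoc j, IsSplitMono.id, Category.id_comp, hsp]

/-- In a von Neumann regular category with split idempotents, every morphism has a kernel
which is a split monomorphism. -/
lemma vnr_kernel [IsIdempotentComplete C] (h : VonNeumannRegular C) {X Y : C} (f : X ⟶ Y) :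
    ∃ (K : C) (ι : K ⟶ X) (ρ : X ⟶ K), ι ≫ ρ = 𝟙 K ∧ ι ≫ f = 0 ∧
      ∀ (W : C) (u : W ⟶ X), u ≫ f = 0 → ∃ v : W ⟶ K, v ≫ ι = u := by
  obtain ⟨W, p, j, hp, hj, hpj⟩ := h f
  haveI := hp; haveI := hj
  have he : (𝟙 X - p ≫ section_ p) ≫ (𝟙 X - p ≫ section_ p) = 𝟙 X - p ≫ section_ p := by
    simp only [Preadditive.sub_comp, Preadditive.comp_sub, Category.id_comp, Category.comp_id,
      Category.assoc]
    rw [← Category.assoc (section_ p) p (section_ p), IsSplitEpi.id, Category.id_comp]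
    abel
  obtain ⟨K, ι, ρ, hKid, hKe⟩ :=
    IsIdempotentComplete.idempotents_split X (𝟙 X - p ≫ section_ p) he
  have hιp : ι ≫ p = 0 := by
    have h1 : ι ≫ (𝟙 X - p ≫ section_ p) = ι := by
      rw [← hKe, ← Category.assoc, hKid, Category.id_comp]
    have h2 : ι ≫ p ≫ section_ p = 0 := by
      have := congrArg (fun z => z ≫ (𝟙 X)) h1
      simp only [Preadditive.comp_sub, Category.comp_id] at h1
      rw [sub_eq_self] at h1
      simpa using h1
    have := congrArg (fun z => z ≫ p) h2
    simpa [Category.assoc, IsSplitEpi.id] using this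
  refine ⟨K, ι, ρ, hKid, ?_, ?_⟩
  · rw [← hpj, ← Category.assoc, hιp, zero_comp]
  · intro W' u hu
    have hup : u ≫ p = 0 := by
      rw [← hpj, ← Category.assoc] at hu
      rw [← cancel_mono j, zero_comp, hu]
    refine ⟨u ≫ ρ, ?_⟩
    rw [Category.assoc, hKe]
    simp only [Preadditive.comp_sub, Category.comp_id]
    rw [← Category.assoc, hup, zero_comp, sub_zero]

/-- Dually, every morphism has a cokernel which is a split epimorphism. -/
lemma vnr_cokernel [IsIdempotentComplete C] (h : VonNeumannRegular C) {X Y : C} (f : X ⟶ Y) :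
    ∃ (Q : C) (q : Y ⟶ Q) (σ : Q ⟶ Y), σ ≫ q = 𝟙 Q ∧ f ≫ q = 0 ∧
      ∀ (W : C) (u : Y ⟶ W), f ≫ u = 0 → ∃ v : Q ⟶ W, q ≫ v = u := by
  obtain ⟨W, p, j, hp, hj, hpj⟩ := h f
  haveI := hp; haveI := hj
  have he : (𝟙 Y - retraction j ≫ j) ≫ (𝟙 Y - retraction j ≫ j) = 𝟙 Y - retraction j ≫ j := by
    simp only [Preadditive.sub_comp, Preadditive.comp_sub, Category.id_comp, Category.comp_id,
      Category.assoc]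
    rw [← Category.assoc j (retraction j) j, IsSplitMono.id, Category.id_comp]
    abel
  obtain ⟨Q, σ, q, hQid, hQe⟩ :=
    IsIdempotentComplete.idempotents_split Y (𝟙 Y - retraction j ≫ j) he
  have hjq : j ≫ q = 0 := by
    have h3 : j ≫ (𝟙 Y - retraction j ≫ j) = 0 := by
      simp only [Preadditive.comp_sub, Category.comp_id, ← Category.assoc, IsSplitMono.id,
        Category.id_comp, sub_self]
    have h2 : j ≫ q ≫ σ = 0 := by rw [hQe]; exact h3
    have h4 : (j ≫ q ≫ σ) ≫ q = 0 ≫ q := by rw [h2]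
    simpa [Category.assoc, hQid] using h4
  refine ⟨Q, q, σ, hQid, ?_, ?_⟩
  · rw [← hpj, Category.assoc, hjq, comp_zero]
  · intro W' u hu
    have hju : j ≫ u = 0 := by
      rw [← hpj, Category.assoc] at hu
      rw [← cancel_epi p, comp_zero, hu]
    refine ⟨σ ≫ u, ?_⟩
    rw [← Category.assoc, hQe]
    simp only [Preadditive.sub_comp, Category.id_comp]
    rw [Category.assoc, hju, comp_zero, sub_zero]

end PaperAux
namespace PaperAux

open Paper CategoryTheory CategoryTheory.Limits

variable {C : Type*} [Category C] [Preadditive C]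

section Pad

variable (t : ℕ) (Z0 : C) (B : ℕ → C) (b : ∀ a, B a ⟶ B (a+1))

/-- Objects of the padded chain: `t` copies of `Z0` followed by the chain `B`. -/
def PO (j : ℕ) : C := if t ≤ j then B (j - t) else Z0

lemma PO_eq (j a : ℕ) (hj : j = t + a) : PO t Z0 B j = B a := by
  subst hj
  simp only [PO, if_pos (Nat.le_add_right t a), Nat.add_sub_cancel_left]

lemma PO_lt (j : ℕ) (hj : j < t) : PO t Z0 B j = Z0 := if_neg (by omega)

/-- Maps of the padded chain. -/
def Pd (j : ℕ) : PO t Z0 B j ⟶ PO t Z0 B (j+1) :=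
  if h : t ≤ j then
    eqToHom (PO_eq t Z0 B j (j - t) (by omega)) ≫ b (j - t) ≫
      eqToHom (PO_eq t Z0 B (j+1) (j - t + 1) (by omega)).symm
  else 0

lemma Pd_lt (j : ℕ) (hj : j < t) : Pd t Z0 B b j = 0 := dif_neg (by omega)

lemma Pd_eq (j a : ℕ) (hj : j = t + a) (e1 : PO t Z0 B j = B a)
    (e2 : B (a+1) = PO t Z0 B (j+1)) :
    Pd t Z0 B b j = eqToHom e1 ≫ b a ≫ eqToHom e2 := by
  have key : ∀ (x : ℕ) (hx : x = a) (f1 : PO t Z0 B j = B x) (f2 : B (x+1) = PO t Z0 B (j+1)),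
      (eqToHom f1 ≫ b x ≫ eqToHom f2 : PO t Z0 B j ⟶ PO t Z0 B (j+1)) =
        eqToHom e1 ≫ b a ≫ eqToHom e2 := by
    rintro x rfl f1 f2; rfl
  rw [Pd, dif_pos (show t ≤ j by omega)]
  exact key _ (by omega) _ _

/-- The padded chain as a `ComposableArrows`. -/
noncomputable def padT (k : ℕ) : ComposableArrows C (t+k+1) :=
  ComposableArrows.mkOfObjOfMapSucc (fun i => PO t Z0 B i.1) (fun i => Pd t Z0 B b i.1)

lemma padT_obj (k j : ℕ) (hj : j ≤ t+k+1) : (padT t Z0 B b k).obj' j hj = PO t Z0 B j := rfl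

lemma padT_map (k j : ℕ) (h0 : j ≤ j+1) (hj : j + 1 ≤ t+k+1) :
    (padT t Z0 B b k).map' j (j+1) h0 hj = Pd t Z0 B b j :=
  ComposableArrows.mkOfObjOfMapSucc_map_succ _ _ j (by omega)

end Pad

/-- A plain `k`-kernel chain `B 0 → B 1 → ⋯` (with the morphism whose kernel is taken
being `b k`). -/
def PlainKer (k : ℕ) (B : ℕ → C) (b : ∀ a, B a ⟶ B (a+1)) : Prop :=
  Mono (b 0) ∧ (∀ a, a + 1 ≤ k → b a ≫ b (a+1) = 0) ∧
  (∀ a, a + 1 ≤ k → ∀ (W : C) (u : W ⟶ B (a+1)), u ≫ b (a+1) = 0 → ∃ v : W ⟶ B a, v ≫ b a = u)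

lemma padT_isKernelSeq (t : ℕ) (Z0 : C) (B : ℕ → C) (b : ∀ a, B a ⟶ B (a+1)) (k : ℕ)
    (hZ : IsZero Z0) (hPK : PlainKer k B b) :
    IsNKernelSeq (t+k) (padT t Z0 B b k) := by
  constructor
  · rw [padT_map]
    rcases Nat.eq_zero_or_pos t with ht | ht
    · subst ht
      rw [Pd_eq 0 Z0 B b 0 0 rfl (PO_eq 0 Z0 B 0 0 rfl) (PO_eq 0 Z0 B 1 1 rfl).symm]
      exact mono_conj _ _ _ hPK.1
    · rw [Pd_lt t Z0 B b 0 ht]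
      exact mono_of_isZero_src
        (show IsZero (PO t Z0 B 0) by rw [PO_lt t Z0 B 0 ht]; exact hZ) _
  · intro i hi
    constructor
    · rw [padT_map, padT_map]
      show @CategoryStruct.comp C _ (PO t Z0 B i) (PO t Z0 B (i+1)) (PO t Z0 B (i+1+1)) _ _ = 0
      by_cases hit : i < t
      · rw [Pd_lt t Z0 B b i hit, zero_comp]
      · obtain ⟨a, rfl⟩ : ∃ a, i = t + a := ⟨i - t, by omega⟩
        rw [Pd_eq t Z0 B b (t+a) a rfl (PO_eq t Z0 B (t+a) a rfl)
              (PO_eq t Z0 B (t+a+1) (a+1) (by omega)).symm,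
            Pd_eq t Z0 B b (t+a+1) (a+1) (by omega) (PO_eq t Z0 B (t+a+1) (a+1) (by omega))
              (PO_eq t Z0 B (t+a+2) (a+2) (by omega)).symm]
        have hz := hPK.2.1 a (by omega)
        simp only [Category.assoc, eqToHom_trans_assoc, eqToHom_refl, Category.id_comp]
        rw [reassoc_of% hz]
        simp
    · intro W u hu
      by_cases h1 : i + 1 < t
      · have hu0 : u = 0 :=
          (show IsZero ((padT t Z0 B b k).obj' (i+1) (by omega)) from
            by rw [padT_obj, PO_lt t Z0 B (i+1) h1]; exact hZ).eq_of_tgt u 0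
        exact ⟨0, by rw [zero_comp, hu0]⟩
      · by_cases h2 : i + 1 = t
        · rw [padT_map] at hu
          haveI : Mono (Pd t Z0 B b (i+1)) :=
            mono_of_conj_eq (PO_eq t Z0 B (i+1) 0 (by omega)) (b 0)
              (PO_eq t Z0 B (i+2) 1 (by omega)).symm
              (Pd_eq t Z0 B b (i+1) 0 (by omega) _ _) hPK.1
          have hu0 : u = 0 := by
            exact (cancel_mono (Pd t Z0 B b (i+1))).1 (hu.trans zero_comp.symm)
          exact ⟨0, by rw [zero_comp, hu0]⟩
        · obtain ⟨a, rfl⟩ : ∃ a, i = t + a := ⟨i - t, by omega⟩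
          rw [padT_map,
            Pd_eq t Z0 B b (t+a+1) (a+1) (by omega) (PO_eq t Z0 B (t+a+1) (a+1) (by omega))
              (PO_eq t Z0 B (t+a+2) (a+2) (by omega)).symm] at hu
          change @CategoryStruct.comp C _ W (PO t Z0 B (t+a+1)) (PO t Z0 B (t+a+1+1)) _ _ = 0 at hu
          change W ⟶ PO t Z0 B (t+a+1) at u
          have hu' : (u ≫ eqToHom (PO_eq t Z0 B (t+a+1) (a+1) (by omega))) ≫ b (a+1) = 0 := by
            have h3 := congrArg
              (fun z => z ≫ eqToHom (PO_eq t Z0 B (t+a+1+1) (a+1+1) (by omega))) hu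
            simpa [Category.assoc] using h3
          obtain ⟨v, hv⟩ := hPK.2.2 a (by omega) W
            (u ≫ eqToHom (PO_eq t Z0 B (t+a+1) (a+1) (by omega))) hu'
          refine ⟨v ≫ eqToHom (PO_eq t Z0 B (t+a) a rfl).symm, ?_⟩
          rw [padT_map,
            Pd_eq t Z0 B b (t+a) a rfl (PO_eq t Z0 B (t+a) a rfl)
              (PO_eq t Z0 B (t+a+1) (a+1) (by omega)).symm]
          show @CategoryStruct.comp C _ W (PO t Z0 B (t+a)) (PO t Z0 B (t+a+1))
            (v ≫ eqToHom (PO_eq t Z0 B (t+a) a rfl).symm) _ = u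
          simp only [Category.assoc, eqToHom_trans_assoc, eqToHom_refl, Category.id_comp]
          rw [← Category.assoc, hv]
          simp [Category.assoc]

end PaperAux
namespace PaperAux

open Paper CategoryTheory CategoryTheory.Limits

variable {C : Type*} [Category C] [Preadditive C]

section Extract

variable {k : ℕ} (T : ComposableArrows C (k+1))

/-- The objects of `T`, reindexed over all of `ℕ` (constant past the end). -/
def Bof (a : ℕ) : C := T.obj ⟨min a (k+1), by omega⟩

/-- The successive maps of `T`, reindexed over all of `ℕ`. -/
def bof (a : ℕ) : Bof T a ⟶ Bof T (a+1) :=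
  T.map (homOfLE (by simp only [Fin.mk_le_mk]; omega))

lemma Bof_eq (a : ℕ) (ha : a ≤ k+1) : Bof T a = T.obj' a ha :=
  congrArg T.obj (Fin.ext (by simp; omega))

lemma bof_eq (a : ℕ) (ha : a ≤ k)
    (e1 : Bof T a = T.obj' a (by omega)) (e2 : T.obj' (a+1) (by omega) = Bof T (a+1)) :
    bof T a = eqToHom e1 ≫ T.map' a (a+1) (by omega) (by omega) ≫ eqToHom e2 := by
  unfold bof
  exact map_eq_conj T _ a (a+1) (by simp; omega) (by simp; omega) (by omega) (by omega) e1 e2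

lemma plainKer_of (hT : IsNKernelSeq k T) : PlainKer k (Bof T) (bof T) := by
  refine ⟨?_, ?_, ?_⟩
  · rw [bof_eq T 0 (by omega) (Bof_eq T 0 (by omega)) (Bof_eq T 1 (by omega)).symm]
    exact mono_conj _ _ _ hT.1
  · intro a ha
    rw [bof_eq T a (by omega) (Bof_eq T a (by omega)) (Bof_eq T (a+1) (by omega)).symm,
        bof_eq T (a+1) (by omega) (Bof_eq T (a+1) (by omega)) (Bof_eq T (a+2) (by omega)).symm]
    have hz := (hT.2 a (by omega)).1
    simp only [Category.assoc, eqToHom_trans_assoc, eqToHom_refl, Category.id_comp]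
    rw [reassoc_of% hz]
    simp
  · intro a ha W u hu
    rw [bof_eq T (a+1) (by omega) (Bof_eq T (a+1) (by omega)) (Bof_eq T (a+2) (by omega)).symm]
      at hu
    have hu' : (u ≫ eqToHom (Bof_eq T (a+1) (by omega))) ≫
        T.map' (a+1) (a+2) (by omega) (by omega) = 0 := by
      have h3 := congrArg (fun z => z ≫ eqToHom (Bof_eq T (a+2) (by omega))) hu
      simpa [Category.assoc] using h3
    obtain ⟨v, hv⟩ := (hT.2 a (by omega)).2 W (u ≫ eqToHom (Bof_eq T (a+1) (by omega))) hu'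
    refine ⟨v ≫ eqToHom (Bof_eq T a (by omega)).symm, ?_⟩
    rw [bof_eq T a (by omega) (Bof_eq T a (by omega)) (Bof_eq T (a+1) (by omega)).symm]
    simp only [Category.assoc, eqToHom_trans_assoc, eqToHom_refl, Category.id_comp]
    rw [← Category.assoc, hv]
    simp [Category.assoc]

end Extract

end PaperAux
namespace PaperAux

open Paper CategoryTheory CategoryTheory.Limits

variable {C : Type*} [Category C] [Preadditive C] [HasZeroObject C]

open ZeroObject

lemma epi_split_of (k N : ℕ) (hkN : k < N) (hker : HasNKernels C k) (hA2op : AxiomA2op C N)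
    {X Y : C} (f : X ⟶ Y) (hf : Epi f) : IsSplitEpi f := by
  obtain ⟨t, ht1, rfl⟩ : ∃ t, 1 ≤ t ∧ N = t + k := ⟨N - k, by omega, by omega⟩
  obtain ⟨T, hX, hY, hmap, hT⟩ := hker f
  have hPK : PlainKer k (Bof T) (bof T) := plainKer_of T hT
  set PT := padT t (0 : C) (Bof T) (bof T) k with hPT
  have hKer : IsNKernelSeq (t+k) PT := padT_isKernelSeq t 0 (Bof T) (bof T) k (isZero_zero C) hPK
  -- the equalities of endpoints
  have p1 : PO t (0 : C) (Bof T) (t+k) = X :=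
    (PO_eq t 0 (Bof T) (t+k) k rfl).trans ((Bof_eq T k (by omega)).trans hX)
  have q1 : Y = PO t (0 : C) (Bof T) (t+k+1) :=
    (hY.symm.trans (Bof_eq T (k+1) (by omega)).symm).trans
      (PO_eq t 0 (Bof T) (t+k+1) (k+1) (by omega)).symm
  have hlast : PT.map' (t+k) (t+k+1) (by omega) (by omega) = eqToHom p1 ≫ f ≫ eqToHom q1 := by
    rw [padT_map,
      Pd_eq t 0 (Bof T) (bof T) (t+k) k rfl (PO_eq t 0 (Bof T) (t+k) k rfl)
        (PO_eq t 0 (Bof T) (t+k+1) (k+1) (by omega)).symm,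
      bof_eq T k (by omega) (Bof_eq T k (by omega)) (Bof_eq T (k+1) (by omega)).symm, hmap]
    simp only [Category.assoc, eqToHom_trans, eqToHom_trans_assoc]
    rfl
  have hEpiLast : Epi (PT.map' (t+k) (t+k+1) (by omega) (by omega)) :=
    epi_of_conj_eq p1 f q1 hlast hf
  have hEx : IsNExactSeq (t+k) PT := hA2op PT hEpiLast hKer
  have hCoY := hEx.2.2
  have hInv0 : Inv PT 0 (by omega) := by
    refine ⟨0, ?_⟩
    rw [padT_map, Pd_lt t 0 (Bof T) (bof T) 0 (by omega)]
    exact zero_comp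
  have hInvTop : Inv PT (t+k) (by omega) :=
    inv_ascend PT hCoY (by omega) hInv0 (t+k) (by omega)
  obtain ⟨(g : PO t (0 : C) (Bof T) (t+k+1) ⟶ PO t (0 : C) (Bof T) (t+k)), hg⟩ := hInvTop
  rw [hlast] at hg
  change @CategoryStruct.comp C _ (PO t (0 : C) (Bof T) (t+k)) (PO t (0 : C) (Bof T) (t+k+1))
    (PO t (0 : C) (Bof T) (t+k+1)) _ (@CategoryStruct.comp C _ (PO t (0 : C) (Bof T) (t+k+1))
      (PO t (0 : C) (Bof T) (t+k)) (PO t (0 : C) (Bof T) (t+k+1)) _ _) = _ at hg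
  have hg' : f ≫ (eqToHom q1 ≫ g ≫ eqToHom p1) ≫ f = f := by
    have h1 := congrArg (fun z => eqToHom p1.symm ≫ z ≫ eqToHom q1.symm) hg
    simpa [Category.assoc, eqToHom_trans_assoc, eqToHom_trans] using h1
  refine IsSplitEpi.mk' ⟨eqToHom q1 ≫ g ≫ eqToHom p1, ?_⟩
  rw [← cancel_epi f, ← Category.assoc, Category.comp_id]
  simpa [Category.assoc] using hg'

end PaperAux
namespace PaperAux

open Paper CategoryTheory CategoryTheory.Limits

variable {C : Type*} [Category C] [Preadditive C]

/-- A reversed plain cokernel chain: `δ j : O (j+1) ⟶ O j`, with `δ 0` the last (epi) map. -/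
def RevCok (k : ℕ) (O : ℕ → C) (δ : ∀ j, O (j+1) ⟶ O j) : Prop :=
  Epi (δ 0) ∧ (∀ j, j + 1 ≤ k → δ (j+1) ≫ δ j = 0) ∧
  (∀ j, j + 1 ≤ k → ∀ (W : C) (u : O (j+1) ⟶ W), δ (j+1) ≫ u = 0 → ∃ v : O j ⟶ W, δ j ≫ v = u)

lemma trim [IsIdempotentComplete C]
    (hsplit : ∀ ⦃A B' : C⦄ (g : A ⟶ B'), Epi g → IsSplitEpi g) :
    ∀ (k : ℕ) (O : ℕ → C) (δ : ∀ j, O (j+1) ⟶ O j), RevCok (k+1) O δ →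
      ∃ (M : C) (p : O (k+2) ⟶ M) (ι : M ⟶ O (k+1)),
        IsSplitEpi p ∧ IsSplitMono ι ∧ p ≫ ι = δ (k+1) := by
  intro k
  induction k with
  | zero =>
    intro O δ hrc
    haveI hse : IsSplitEpi (δ 0) := hsplit (δ 0) hrc.1
    set s := section_ (δ 0) with hs
    have hid : s ≫ δ 0 = 𝟙 (O 0) := IsSplitEpi.id (δ 0)
    have he : (𝟙 (O 1) - δ 0 ≫ s) ≫ (𝟙 (O 1) - δ 0 ≫ s) = 𝟙 (O 1) - δ 0 ≫ s := by
      simp only [Preadditive.sub_comp, Preadditive.comp_sub, Category.id_comp, Category.comp_id,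
        Category.assoc]
      rw [reassoc_of% hid]
      abel
    obtain ⟨M, ι, ρ, hMid, hMe⟩ :=
      IsIdempotentComplete.idempotents_split (O 1) (𝟙 (O 1) - δ 0 ≫ s) he
    have hιδ : ι ≫ δ 0 = 0 := by
      have h1 : ι ≫ (𝟙 (O 1) - δ 0 ≫ s) = ι := by
        rw [← hMe, ← Category.assoc, hMid, Category.id_comp]
      have h2 : ι ≫ δ 0 ≫ s = 0 := by
        simp only [Preadditive.comp_sub, Category.comp_id] at h1
        rw [sub_eq_self] at h1
        simpa using h1
      have h3 := congrArg (fun z => z ≫ δ 0) h2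
      simpa [Category.assoc, hid] using h3
    have hfac : (δ 1 ≫ ρ) ≫ ι = δ 1 := by
      rw [Category.assoc, hMe]
      simp only [Preadditive.comp_sub, Category.comp_id]
      rw [← Category.assoc, hrc.2.1 0 (by omega), zero_comp, sub_zero]
    have hpepi : Epi (δ 1 ≫ ρ) := by
      apply Preadditive.epi_of_cancel_zero
      intro R u hu
      have h1 : δ 1 ≫ (ρ ≫ u) = 0 := by rw [← Category.assoc]; exact hu
      obtain ⟨v, hv⟩ := hrc.2.2 0 (by omega) R (ρ ≫ u) h1
      have h2 : ι ≫ ρ ≫ u = ι ≫ δ 0 ≫ v := by rw [hv]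
      rw [← Category.assoc, ← Category.assoc, hιδ, hMid, zero_comp, Category.id_comp] at h2
      exact h2
    exact ⟨M, δ 1 ≫ ρ, ι, hsplit _ hpepi, IsSplitMono.mk' ⟨ρ, hMid⟩, hfac⟩
  | succ k ih =>
    intro O δ hrc
    haveI hse : IsSplitEpi (δ 0) := hsplit (δ 0) hrc.1
    set s := section_ (δ 0) with hs
    have hid : s ≫ δ 0 = 𝟙 (O 0) := IsSplitEpi.id (δ 0)
    have he : (𝟙 (O 1) - δ 0 ≫ s) ≫ (𝟙 (O 1) - δ 0 ≫ s) = 𝟙 (O 1) - δ 0 ≫ s := by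
      simp only [Preadditive.sub_comp, Preadditive.comp_sub, Category.id_comp, Category.comp_id,
        Category.assoc]
      rw [reassoc_of% hid]
      abel
    obtain ⟨M, ι, ρ, hMid, hMe⟩ :=
      IsIdempotentComplete.idempotents_split (O 1) (𝟙 (O 1) - δ 0 ≫ s) he
    have hιδ : ι ≫ δ 0 = 0 := by
      have h1 : ι ≫ (𝟙 (O 1) - δ 0 ≫ s) = ι := by
        rw [← hMe, ← Category.assoc, hMid, Category.id_comp]
      have h2 : ι ≫ δ 0 ≫ s = 0 := by
        simp only [Preadditive.comp_sub, Category.comp_id] at h1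
        rw [sub_eq_self] at h1
        simpa using h1
      have h3 := congrArg (fun z => z ≫ δ 0) h2
      simpa [Category.assoc, hid] using h3
    -- the trimmed chain
    let O' : ℕ → C := fun j => match j with
      | 0 => M
      | (j+1) => O (j+2)
    let δ' : ∀ j, O' (j+1) ⟶ O' j := fun j => match j with
      | 0 => δ 1 ≫ ρ
      | (j+1) => δ (j+2)
    have hrc' : RevCok (k+1) O' δ' := by
      refine ⟨?_, ?_, ?_⟩
      · show Epi (δ 1 ≫ ρ)
        apply Preadditive.epi_of_cancel_zero
        intro R u hu
        have h1 : δ 1 ≫ (ρ ≫ u) = 0 := by rw [← Category.assoc]; exact hu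
        obtain ⟨v, hv⟩ := hrc.2.2 0 (by omega) R (ρ ≫ u) h1
        have h2 : ι ≫ ρ ≫ u = ι ≫ δ 0 ≫ v := by rw [hv]
        rw [← Category.assoc, ← Category.assoc, hιδ, hMid, zero_comp, Category.id_comp] at h2
        exact h2
      · intro j hj
        match j with
        | 0 =>
          show δ 2 ≫ (δ 1 ≫ ρ) = 0
          rw [← Category.assoc, hrc.2.1 1 (by omega), zero_comp]
        | (j+1) =>
          show δ (j+3) ≫ δ (j+2) = 0
          exact hrc.2.1 (j+2) (by omega)
      · intro j hj W u hu
        match j with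
        | 0 =>
          obtain ⟨v, hv⟩ := hrc.2.2 1 (by omega) W u hu
          refine ⟨ι ≫ v, ?_⟩
          show (δ 1 ≫ ρ) ≫ ι ≫ v = u
          have : (δ 1 ≫ ρ) ≫ ι = δ 1 := by
            rw [Category.assoc, hMe]
            simp only [Preadditive.comp_sub, Category.comp_id]
            rw [← Category.assoc, hrc.2.1 0 (by omega), zero_comp, sub_zero]
          rw [← Category.assoc, this, hv]
        | (j+1) =>
          obtain ⟨v, hv⟩ := hrc.2.2 (j+2) (by omega) W u hu
          exact ⟨v, hv⟩
    obtain ⟨M', p, ι', hp, hι', hfac⟩ := ih O' δ' hrc'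
    exact ⟨M', p, ι', hp, hι', hfac⟩

end PaperAux
namespace PaperAux

open Paper CategoryTheory CategoryTheory.Limits

variable {C : Type*} [Category C] [Preadditive C] [HasZeroObject C] [IsIdempotentComplete C]

lemma vnr_of_two (k N : ℕ) (hk : 1 ≤ k) (hkN : k < N)
    (hK : IsNAbelian C k) (hNa : IsNAbelian C N) : VonNeumannRegular C := by
  have hsplit : ∀ ⦃A B' : C⦄ (g : A ⟶ B'), Epi g → IsSplitEpi g :=
    fun A B' g hg => epi_split_of k N hkN hK.1 hNa.2.2.2 g hg
  intro X Y f
  obtain ⟨T, hX, hY, hmap, hT⟩ := hK.2.1 f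
  let O : ℕ → C := fun j => T.obj ⟨k+1-j, by omega⟩
  let δ : ∀ j, O (j+1) ⟶ O j := fun j => T.map (homOfLE (by simp only [Fin.mk_le_mk]; omega))
  have hO_eq : ∀ (j a : ℕ) (hja : k + 1 - j = a) (ha : a ≤ k+1), O j = T.obj' a ha := by
    intro j a hja ha
    exact congrArg T.obj (Fin.ext (by simp [hja]))
  have hδ_eq : ∀ (j a : ℕ) (hjk : j ≤ k) (hja : k + 1 - (j+1) = a) (hak : a + 1 ≤ k + 1)
      (e1 : O (j+1) = T.obj' a (by omega)) (e2 : T.obj' (a+1) hak = O j),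
      δ j = eqToHom e1 ≫ T.map' a (a+1) (by omega) hak ≫ eqToHom e2 := by
    intro j a hjk hja hak e1 e2
    exact map_eq_conj T _ a (a+1) (by simp; omega) (by simp; omega) (by omega) hak e1 e2
  have hrc : RevCok k O δ := by
    refine ⟨?_, ?_, ?_⟩
    · have h0 : δ 0 = eqToHom (hO_eq 1 k (by omega) (by omega)) ≫
          T.map' k (k+1) (by omega) (by omega) ≫ eqToHom (hO_eq 0 (k+1) (by omega) (by omega)).symm :=
        hδ_eq 0 k (by omega) (by omega) (by omega) _ _
      exact epi_of_conj_eq _ _ _ h0 hT.1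
    · intro j hj
      obtain ⟨i, hi⟩ : ∃ i, i + j + 1 = k := ⟨k-j-1, by omega⟩
      rw [hδ_eq (j+1) i (by omega) (by omega) (by omega)
            (hO_eq (j+2) i (by omega) (by omega)) (hO_eq (j+1) (i+1) (by omega) (by omega)).symm,
          hδ_eq j (i+1) (by omega) (by omega) (by omega)
            (hO_eq (j+1) (i+1) (by omega) (by omega)) (hO_eq j (i+2) (by omega) (by omega)).symm]
      have hz := (hT.2 i (by omega)).1
      simp only [Category.assoc, eqToHom_trans_assoc, eqToHom_refl, Category.id_comp]
      rw [reassoc_of% hz]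
      simp
    · intro j hj W u hu
      obtain ⟨i, hi⟩ : ∃ i, i + j + 1 = k := ⟨k-j-1, by omega⟩
      rw [hδ_eq (j+1) i (by omega) (by omega) (by omega)
            (hO_eq (j+2) i (by omega) (by omega)) (hO_eq (j+1) (i+1) (by omega) (by omega)).symm]
        at hu
      have hu' : T.map' i (i+1) (by omega) (by omega) ≫
          (eqToHom (hO_eq (j+1) (i+1) (by omega) (by omega)).symm ≫ u) = 0 := by
        have h3 := congrArg (fun z => eqToHom (hO_eq (j+2) i (by omega) (by omega)).symm ≫ z) hu
        simpa [Category.assoc] using h3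
      obtain ⟨v, hv⟩ := (hT.2 i (by omega)).2 W
        (eqToHom (hO_eq (j+1) (i+1) (by omega) (by omega)).symm ≫ u) hu'
      refine ⟨eqToHom (hO_eq j (i+2) (by omega) (by omega)) ≫ v, ?_⟩
      rw [hδ_eq j (i+1) (by omega) (by omega) (by omega)
            (hO_eq (j+1) (i+1) (by omega) (by omega)) (hO_eq j (i+2) (by omega) (by omega)).symm]
      simp only [Category.assoc, eqToHom_trans_assoc, eqToHom_refl, Category.id_comp]
      rw [hv]
      simp
  obtain ⟨t, rfl⟩ : ∃ t, k = t + 1 := ⟨k-1, by omega⟩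
  obtain ⟨M, p, ι, hp, hι, hfac⟩ := trim hsplit t O δ hrc
  have E1 : O (t+2) = X := (hO_eq (t+2) 0 (by omega) (by omega)).trans hX
  have E2 : Y = O (t+1) := (hY.symm.trans (obj'_congr T rfl (by omega) (by omega))).trans
    (hO_eq (t+1) 1 (by omega) (by omega)).symm
  have hδk : δ (t+1) = eqToHom E1 ≫ f ≫ eqToHom E2 := by
    rw [hδ_eq (t+1) 0 (by omega) (by omega) (by omega)
          (hO_eq (t+2) 0 (by omega) (by omega)) (hO_eq (t+1) 1 (by omega) (by omega)).symm, hmap]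
    simp only [Category.assoc, eqToHom_trans, eqToHom_trans_assoc]
  haveI := hp; haveI := hι
  refine ⟨M, eqToHom E1.symm ≫ p, ι ≫ eqToHom E2.symm, ?_, ?_, ?_⟩
  · refine IsSplitEpi.mk' ⟨section_ p ≫ eqToHom E1, ?_⟩
    simp [IsSplitEpi.id]
  · refine IsSplitMono.mk' ⟨eqToHom E2 ≫ retraction ι, ?_⟩
    simp [IsSplitMono.id]
  · have : (eqToHom E1.symm ≫ p) ≫ ι ≫ eqToHom E2.symm =
        eqToHom E1.symm ≫ (p ≫ ι) ≫ eqToHom E2.symm := by simp [Category.assoc]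
    rw [this, hfac, hδk]
    simp
end PaperAux
namespace PaperAux

open Paper CategoryTheory CategoryTheory.Limits

variable {C : Type*} [Category C] [Preadditive C]

section Converse

variable [HasZeroObject C] [IsIdempotentComplete C]

open ZeroObject

lemma vnr_hasNKernels (h : VonNeumannRegular C) (n : ℕ) (hn : 1 ≤ n) : HasNKernels C n := by
  intro X Y f
  obtain ⟨K, ι, ρ, hKid, hιf, hfac⟩ := vnr_kernel h f
  obtain ⟨t, rfl⟩ : ∃ t, n = t + 1 := ⟨n-1, by omega⟩
  let B : ℕ → C := fun a => match a with | 0 => K | 1 => X | _+2 => Y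
  let b : ∀ a, B a ⟶ B (a+1) := fun a => match a with | 0 => ι | 1 => f | (a+2) => 𝟙 Y
  have hPK : PlainKer 1 B b := by
    refine ⟨?_, ?_, ?_⟩
    · show Mono ι
      haveI : IsSplitMono ι := IsSplitMono.mk' ⟨ρ, hKid⟩
      infer_instance
    · intro a ha
      obtain rfl : a = 0 := by omega
      exact hιf
    · intro a ha W u hu
      obtain rfl : a = 0 := by omega
      exact hfac W u hu
  refine ⟨padT t 0 B b 1, PO_eq t 0 B (t+1) 1 rfl, PO_eq t 0 B (t+2) 2 (by omega), ?_, ?_⟩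
  · rw [padT_map]
    exact Pd_eq t 0 B b (t+1) 1 rfl (PO_eq t 0 B (t+1) 1 rfl) (PO_eq t 0 B (t+2) 2 (by omega)).symm
  · exact padT_isKernelSeq t 0 B b 1 (isZero_zero C) hPK

lemma vnr_hasNCokernels (h : VonNeumannRegular C) (n : ℕ) (hn : 1 ≤ n) : HasNCokernels C n := by
  intro X Y f
  obtain ⟨Q, q, σ, hQid, hfq, hfac⟩ := vnr_cokernel h f
  haveI hq : IsSplitEpi q := IsSplitEpi.mk' ⟨σ, hQid⟩
  let O : ℕ → C := fun j => match j with | 0 => X | 1 => Y | 2 => Q | _+3 => (0 : C)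
  let d : ∀ j, O j ⟶ O (j+1) := fun j => match j with | 0 => f | 1 => q | (j+2) => 0
  let T : ComposableArrows C (n+1) :=
    ComposableArrows.mkOfObjOfMapSucc (fun i => O i.1) (fun i => d i.1)
  have hmap : ∀ (j : ℕ) (h0 : j ≤ j+1) (hj : j+1 ≤ n+1), T.map' j (j+1) h0 hj = d j :=
    fun j h0 hj => ComposableArrows.mkOfObjOfMapSucc_map_succ _ _ j (by omega)
  refine ⟨T, rfl, rfl, ?_, ?_, ?_⟩
  · rw [hmap 0 (by omega) (by omega)]
    show f = eqToHom rfl ≫ f ≫ eqToHom rfl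
    simp
  · have hepi : ∀ m, 1 ≤ m → Epi (d m) := by
      intro m hm
      match m, hm with
      | 1, _ => show Epi q; infer_instance
      | (m+2), _ =>
        show Epi (0 : O (m+2) ⟶ O (m+3))
        exact epi_of_isZero_tgt (isZero_zero C) _
    rw [hmap n (by omega) (by omega)]
    exact hepi n hn
  · intro i hi
    match i, hi with
    | 0, hi =>
      constructor
      · rw [hmap 0 (by omega) (by omega), hmap 1 (by omega) (by omega)]
        exact hfq
      · intro W u hu
        rw [hmap 0 (by omega) (by omega)] at hu
        obtain ⟨v, hv⟩ := hfac W u hu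
        exact ⟨v, by rw [hmap 1 (by omega) (by omega)]; exact hv⟩
    | 1, hi =>
      constructor
      · rw [hmap 1 (by omega) (by omega), hmap 2 (by omega) (by omega)]
        show q ≫ (0 : Q ⟶ O 3) = 0
        simp
      · intro W u hu
        rw [hmap 1 (by omega) (by omega)] at hu
        have hu0 : u = 0 := by
          have h2 : (σ ≫ q) ≫ u = 0 :=
            (Category.assoc _ _ _).trans ((congrArg (σ ≫ ·) hu).trans comp_zero)
          rw [hQid] at h2
          exact (Category.id_comp _).symm.trans h2
        refine ⟨0, ?_⟩
        rw [comp_zero, hu0]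
    | (i+2), hi =>
      constructor
      · rw [hmap (i+2) (by omega) (by omega), hmap (i+3) (by omega) (by omega)]
        show (0 : O (i+2) ⟶ O (i+3)) ≫ _ = 0
        exact zero_comp
      · intro W u hu
        have hu0 : u = 0 := (isZero_zero C).eq_of_src u 0
        refine ⟨0, ?_⟩
        rw [comp_zero, hu0]

lemma vnr_A2 (h : VonNeumannRegular C) (n : ℕ) : AxiomA2 C n := by
  intro T hM hCok
  have h0 : Inv T 0 (by omega) := by
    haveI := vnr_mono_split h _ hM
    refine ⟨retraction (T.map' 0 1 _ _), ?_⟩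
    have hid := IsSplitMono.id (T.map' 0 1 _ _)
    simp [reassoc_of% hid]
  have hInv : ∀ i (hi : i+1 ≤ n+1), Inv T i hi := inv_ascend T hCok.2 (by omega) h0
  exact ⟨⟨hM, fun i hi => yexact_of_inv T i hi (hInv i (by omega)) (hCok.2 i hi)⟩, hCok⟩

lemma vnr_A2op (h : VonNeumannRegular C) (n : ℕ) : AxiomA2op C n := by
  intro T hE hKer
  have htop : Inv T n (by omega) := by
    haveI := vnr_epi_split h _ hE
    refine ⟨section_ (T.map' n (n+1) _ _), ?_⟩
    have hid := IsSplitEpi.id (T.map' n (n+1) _ _)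
    simp [hid]
  have hInv : ∀ i (hi : i ≤ n), Inv T i (by omega) :=
    fun i hi => inv_descend T hKer.2 n (by omega) htop (n-i) i (by omega)
  exact ⟨hKer, hE, fun i hi => coy_of_inv T i hi (hInv (i+1) (by omega)) (hKer.2 i hi)⟩

end Converse

end PaperAux
open PaperAux

/-- If `C` is `m`-abelian and `n`-abelian for two distinct positive integers `m ≠ n`,
then `C` is von Neumann regular; conversely, a von Neumann regular category is
`n`-abelian for every positive integer `n`. -/
theorem stmt_16 {C : Type*} [Category C] [Preadditive C] [HasZeroObject C]
    [HasFiniteBiproducts C] [IsIdempotentComplete C] :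
    ((∃ m n : ℕ, 1 ≤ m ∧ 1 ≤ n ∧ m ≠ n ∧ IsNAbelian C m ∧ IsNAbelian C n) →
      VonNeumannRegular C) ∧
    (VonNeumannRegular C → ∀ n : ℕ, 1 ≤ n → IsNAbelian C n) := by
  constructor
  · rintro ⟨m, n, hm, hn, hmn, hM, hN⟩
    rcases Nat.lt_or_ge m n with hlt | hge
    · exact vnr_of_two m n hm hlt hM hN
    · exact vnr_of_two n m hn (by omega) hN hM
  · intro h n hn
    exact ⟨vnr_hasNKernels h n hn, vnr_hasNCokernels h n hn, vnr_A2 h n, vnr_A2op h n⟩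
end

section
/- In a preadditive category C, consider a sequence Z_{m+1} → Z_m → ⋯ → Z_1 → Z_0 which is an m-exact sequence. Then the sequence splits (i.e. the first map is a split monomorphism and the last a split epimorphism) if and only if the last map h₁ : Z_1 → Z_0 is a split epimorphism, if and only if the first map h_{m+1} is a split monomorphism. -/
open CategoryTheory CategoryTheory.Limits

open Paper


section Aux

variable {C : Type*} [Category C] [Preadditive C] {n : ℕ}

/-- Auxiliary predicate: the map `T_k → T_{k+1}` admits a "weak inverse" `v` with
`f ≫ v ≫ f = f`. -/
def Pk (T : ComposableArrows C (n+2)) (k : ℕ) : Prop :=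
  ∃ (h : k + 1 ≤ n + 2) (v : T.obj' (k+1) h ⟶ T.obj' k (by omega)),
    T.map' k (k+1) (by omega) h ≫ v ≫ T.map' k (k+1) (by omega) h =
      T.map' k (k+1) (by omega) h

lemma down_step (T : ComposableArrows C (n+2)) (hK : IsNKernelSeq (n+1) T)
    (i : ℕ) (h2 : i + 2 ≤ n + 2) (hp : Pk T (i+1)) : Pk T i := by
  obtain ⟨h', v, hv⟩ := hp
  have p1 : i + 1 ≤ n + 2 := by omega
  obtain ⟨hz, hlift⟩ := hK.2 i h2
  have hv' : T.map' (i+1) (i+2) (by omega) h2 ≫ v ≫ T.map' (i+1) (i+2) (by omega) h2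
      = T.map' (i+1) (i+2) (by omega) h2 := hv
  have hz' : T.map' i (i+1) (by omega) (by omega) ≫ T.map' (i+1) (i+2) (by omega) h2 = 0 := hz
  have hw : (𝟙 (T.obj' (i+1) p1) - T.map' (i+1) (i+2) (by omega) h2 ≫ v) ≫
      T.map' (i+1) (i+2) (by omega) h2 = 0 := by
    simp [Preadditive.sub_comp, hv']
  obtain ⟨v', hv2⟩ := hlift _ _ hw
  have hv2' : v' ≫ T.map' i (i+1) (by omega) (by omega)
      = 𝟙 (T.obj' (i+1) p1) - T.map' (i+1) (i+2) (by omega) h2 ≫ v := hv2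
  have hfin : T.map' i (i+1) (by omega) (by omega) ≫ v' ≫ T.map' i (i+1) (by omega) (by omega)
      = T.map' i (i+1) (by omega) (by omega) := by
    simp [hv2', Preadditive.comp_sub, reassoc_of% hz']
  exact ⟨by omega, v', hfin⟩

lemma up_step (T : ComposableArrows C (n+2)) (hC : IsNCokernelSeq (n+1) T)
    (k : ℕ) (h2 : k + 2 ≤ n + 2) (hp : Pk T k) : Pk T (k+1) := by
  obtain ⟨h', v, hv⟩ := hp
  have p1 : k + 1 ≤ n + 2 := by omega
  obtain ⟨hz, hlift⟩ := hC.2 k h2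
  have hv' : T.map' k (k+1) (by omega) (by omega) ≫ v ≫ T.map' k (k+1) (by omega) (by omega)
      = T.map' k (k+1) (by omega) (by omega) := hv
  have hz' : T.map' k (k+1) (by omega) (by omega) ≫ T.map' (k+1) (k+2) (by omega) h2 = 0 := hz
  have hw : T.map' k (k+1) (by omega) (by omega) ≫
      (𝟙 (T.obj' (k+1) p1) - v ≫ T.map' k (k+1) (by omega) (by omega)) = 0 := by
    simp [Preadditive.comp_sub, hv']
  obtain ⟨v2, hv2⟩ := hlift _ _ hw
  have hv2' : T.map' (k+1) (k+2) (by omega) h2 ≫ v2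
      = 𝟙 (T.obj' (k+1) p1) - v ≫ T.map' k (k+1) (by omega) (by omega) := hv2
  have hfin : T.map' (k+1) (k+2) (by omega) h2 ≫ v2 ≫ T.map' (k+1) (k+2) (by omega) h2
      = T.map' (k+1) (k+2) (by omega) h2 := by
    simp [reassoc_of% hv2', Preadditive.sub_comp, hz']
  exact ⟨by omega, v2, hfin⟩

lemma base_epi (T : ComposableArrows C (n+2)) (hK : IsNKernelSeq (n+1) T)
    (he : IsSplitEpi (T.map' (n+1) (n+2) (by omega) (by omega))) : Pk T n := by
  obtain ⟨hz, hlift⟩ := hK.2 n (by omega)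
  obtain ⟨⟨s, hs⟩⟩ := he
  have hz' : T.map' n (n+1) (by omega) (by omega) ≫ T.map' (n+1) (n+2) (by omega) (by omega)
      = 0 := hz
  have hw : (𝟙 (T.obj' (n+1) (by omega)) - T.map' (n+1) (n+2) (by omega) (by omega) ≫ s) ≫
      T.map' (n+1) (n+2) (by omega) (by omega) = 0 := by
    simp [Preadditive.sub_comp, hs]
  obtain ⟨v, hv⟩ := hlift _ _ hw
  have hv' : v ≫ T.map' n (n+1) (by omega) (by omega)
      = 𝟙 (T.obj' (n+1) (by omega)) - T.map' (n+1) (n+2) (by omega) (by omega) ≫ s := hv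
  have hfin : T.map' n (n+1) (by omega) (by omega) ≫ v ≫ T.map' n (n+1) (by omega) (by omega)
      = T.map' n (n+1) (by omega) (by omega) := by
    simp [hv', Preadditive.comp_sub, reassoc_of% hz']
  exact ⟨by omega, v, hfin⟩

lemma base_mono (T : ComposableArrows C (n+2)) (hC : IsNCokernelSeq (n+1) T)
    (hmo : IsSplitMono (T.map' 0 1 (by omega) (by omega))) : Pk T 1 := by
  obtain ⟨hz, hlift⟩ := hC.2 0 (by omega)
  obtain ⟨⟨r, hr⟩⟩ := hmo
  have hz' : T.map' 0 1 (by omega) (by omega) ≫ T.map' 1 2 (by omega) (by omega) = 0 := hz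
  have hw : T.map' 0 1 (by omega) (by omega) ≫
      (𝟙 (T.obj' 1 (by omega)) - r ≫ T.map' 0 1 (by omega) (by omega)) = 0 := by
    have e : T.map' 0 1 (by omega) (by omega) ≫ r ≫ T.map' 0 1 (by omega) (by omega)
        = T.map' 0 1 (by omega) (by omega) := by
      rw [← Category.assoc]
      exact (congrArg (fun x => x ≫ T.map' 0 1 (by omega) (by omega)) hr).trans (Category.id_comp _)
    rw [Preadditive.comp_sub, Category.comp_id]; exact sub_eq_zero.mpr e.symm
  obtain ⟨v, hv⟩ := hlift _ _ hw
  have hv' : T.map' 1 2 (by omega) (by omega) ≫ v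
      = 𝟙 (T.obj' 1 (by omega)) - r ≫ T.map' 0 1 (by omega) (by omega) := hv
  have hfin : T.map' 1 2 (by omega) (by omega) ≫ v ≫ T.map' 1 2 (by omega) (by omega)
      = T.map' 1 2 (by omega) (by omega) := by
    rw [← Category.assoc, hv', Preadditive.sub_comp, Category.id_comp, Category.assoc, hz',
      Limits.comp_zero, sub_zero]
  exact ⟨by omega, v, hfin⟩

lemma epi_to_mono {m : ℕ} (hm : 1 ≤ m) (T : ComposableArrows C (m + 1))
    (hT : IsNExactSeq m T) (he : IsSplitEpi (T.map' m (m + 1) (by omega) (by omega))) :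
    IsSplitMono (T.map' 0 1 (Nat.zero_le 1) (Nat.le_add_left 1 m)) := by
  obtain ⟨n, rfl⟩ : ∃ n, m = n + 1 := ⟨m - 1, by omega⟩
  have hbase : Pk T n := base_epi T hT.1 he
  have des : ∀ d, d ≤ n → Pk T (n - d) := by
    intro d
    induction d with
    | zero => intro _; exact hbase
    | succ d ih =>
      intro hd
      have e : n - d = n - (d+1) + 1 := by omega
      exact down_step T hT.1 (n - (d+1)) (by omega) (e ▸ ih (by omega))
  have h0 : Pk T 0 := by
    have e : n - n = 0 := by omega
    exact e ▸ des n le_rfl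
  obtain ⟨h, v, hv⟩ := h0
  have hv' : T.map' 0 1 (by omega) (by omega) ≫ v ≫ T.map' 0 1 (by omega) (by omega)
      = T.map' 0 1 (by omega) (by omega) := hv
  have hM : Mono (T.map' 0 1 (by omega) (by omega)) := hT.1.1
  have hid : T.map' 0 1 (by omega) (by omega) ≫ v = 𝟙 _ := by
    have p0 : (0:ℕ) ≤ 1 := by omega
    have p1 : (1:ℕ) ≤ n + 2 := by omega
    rw [← cancel_mono (T.map' 0 1 p0 p1)]
    rw [Category.assoc, Category.id_comp]; exact hv'
  exact ⟨⟨⟨v, hid⟩⟩⟩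

lemma mono_to_epi {m : ℕ} (hm : 1 ≤ m) (T : ComposableArrows C (m + 1))
    (hT : IsNExactSeq m T) (hmo : IsSplitMono (T.map' 0 1 (Nat.zero_le 1) (Nat.le_add_left 1 m))) :
    IsSplitEpi (T.map' m (m + 1) (by omega) (by omega)) := by
  obtain ⟨n, rfl⟩ : ∃ n, m = n + 1 := ⟨m - 1, by omega⟩
  have hbase : Pk T 1 := base_mono T hT.2 hmo
  have asc : ∀ k, 1 ≤ k → k ≤ n + 1 → Pk T k := by
    intro k hk
    induction k, hk using Nat.le_induction with
    | base => intro _; exact hbase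
    | succ k hk ih =>
      intro hk1
      exact up_step T hT.2 k (by omega) (ih (by omega))
  obtain ⟨h, v, hv⟩ := asc (n+1) (by omega) le_rfl
  have hv' : T.map' (n+1) (n+2) (by omega) (by omega) ≫ v ≫
      T.map' (n+1) (n+2) (by omega) (by omega) = T.map' (n+1) (n+2) (by omega) (by omega) := hv
  have hE : Epi (T.map' (n+1) (n+2) (by omega) (by omega)) := hT.2.1
  have hid : v ≫ T.map' (n+1) (n+2) (by omega) (by omega) = 𝟙 _ := by
    have pa : n + 1 ≤ n + 2 := by omega
    have pb : n + 2 ≤ n + 2 := le_rfl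
    rw [← cancel_epi (T.map' (n+1) (n+2) pa pb)]
    simpa using hv'
  exact ⟨⟨⟨v, hid⟩⟩⟩

end Aux

/-- For an `m`-exact sequence `Z_{m+1} → ⋯ → Z_0` in a preadditive category, being split
(first map split mono and last map split epi) is equivalent to the last map being a split
epimorphism, and also to the first map being a split monomorphism. -/
theorem stmt_17 {C : Type*} [Category C] [Preadditive C] (m : ℕ) (hm : 1 ≤ m)
    (T : ComposableArrows C (m + 1)) (hT : IsNExactSeq m T) :
    ((IsSplitMono (T.map' 0 1 (by omega) (by omega)) ∧
        IsSplitEpi (T.map' m (m + 1) (by omega) (by omega))) ↔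
      IsSplitEpi (T.map' m (m + 1) (by omega) (by omega))) ∧
    (IsSplitEpi (T.map' m (m + 1) (by omega) (by omega)) ↔
      IsSplitMono (T.map' 0 1 (by omega) (by omega))) := by
  have A : IsSplitEpi (T.map' m (m + 1) (by omega) (by omega)) →
      IsSplitMono (T.map' 0 1 (by omega) (by omega)) := fun he => epi_to_mono hm T hT he
  have B : IsSplitMono (T.map' 0 1 (by omega) (by omega)) →
      IsSplitEpi (T.map' m (m + 1) (by omega) (by omega)) := fun hmo => mono_to_epi hm T hT hmo
  exact ⟨⟨fun h => h.2, fun h => ⟨A h, h⟩⟩, ⟨A, B⟩⟩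
end

section
/- Every n-abelian category is balanced: any morphism that is both a monomorphism and an epimorphism is an isomorphism. -/
open CategoryTheory CategoryTheory.Limits

open Paper

/-- Every `n`-abelian category is balanced: a morphism which is both a monomorphism and
an epimorphism is an isomorphism. -/
theorem stmt_18 {C : Type*} [Category C] [Preadditive C] [HasZeroObject C]
    [HasFiniteBiproducts C] [IsIdempotentComplete C] (n : ℕ) (hn : 1 ≤ n)
    (h : IsNAbelian C n) {X Y : C} (f : X ⟶ Y) (hmono : Mono f) (hepi : Epi f) :
    IsIso f := by
  obtain ⟨hK, hCK, hA2, hA2op⟩ := h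
  obtain ⟨T, hX, hY, hfeq, hcok⟩ := hCK f
  have h2 : (0 : ℕ) + 2 ≤ n + 1 := by omega
  -- map' 0 1 is mono and epi
  have hmono' : Mono (T.map' 0 1 (by omega) (by omega)) := by
    rw [hfeq]; exact mono_comp _ _
  have hepi' : Epi (T.map' 0 1 (by omega) (by omega)) := by
    rw [hfeq]; exact epi_comp _ _
  -- map' 1 2 = 0
  have hg0 : T.map' 1 2 (by omega) (by omega) = 0 := by
    have h0 := (hcok.2 0 h2).1
    have h0' : T.map' 0 1 (by omega) (by omega) ≫ T.map' 1 2 (by omega) (by omega) = 0 := h0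
    haveI := hepi'
    have h0'' : T.map' 0 1 (by omega) (by omega) ≫ T.map' 1 2 (by omega) (by omega)
        = T.map' 0 1 (by omega) (by omega) ≫ 0 := by rw [Limits.comp_zero]; exact h0'
    exact (cancel_epi _).1 h0''
  -- A2 gives n-exactness, in particular the kernel-sequence exactness at 0
  have hexact := hA2 T hmono' hcok
  obtain ⟨v, hv⟩ := (hexact.1.2 0 h2).2 (T.obj' 1 (by omega)) (𝟙 _) (by
    have : T.map' 1 2 (by omega) (by omega) = 0 := hg0
    simp only [this]
    exact Limits.comp_zero)
  have hv' : v ≫ T.map' 0 1 (by omega) (by omega) = 𝟙 (T.obj' 1 (by omega)) := hv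
  -- translate along eqToHom
  have hv'' := reassoc_of% hv'
  have hXf : eqToHom hX ≫ f = T.map' 0 1 (by omega) (by omega) ≫ eqToHom hY := by
    rw [hfeq]; simp
    erw [eqToHom_trans, eqToHom_refl, Category.comp_id]
  have key : (eqToHom hY.symm ≫ v ≫ eqToHom hX) ≫ f = 𝟙 Y := by
    simp only [Category.assoc]
    rw [hXf, hv'']
    simp
    erw [eqToHom_trans, eqToHom_refl]
  refine ⟨⟨eqToHom hY.symm ≫ v ≫ eqToHom hX, ?_, key⟩⟩
  have : f ≫ (eqToHom hY.symm ≫ v ≫ eqToHom hX) ≫ f = 𝟙 X ≫ f := by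
    rw [key]; simp
  exact (cancel_mono f).1 (by simpa using this)
end
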